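/- arXiv:1607.01413 — 10 statements merged into one kernel-verified Lean document; each statement's English description precedes it below -/
import Mathlib

section
/- Let M be a complex Hilbert space, Y a positive contraction on M, and τ ∈ 𝕋². Then for every λ ∈ 𝔻² the operator 1 − τ̄¹λ¹(1−Y) − τ̄²λ²Y is invertible in B(M) (indeed ‖τ̄¹λ¹(1−Y) + τ̄²λ²Y‖ ≤ ‖λ‖_∞ < 1), the operator I_Y(λ) = (τ̄¹λ¹Y + τ̄²λ²(1−Y) − τ̄¹τ̄²λ¹λ²)(1 − τ̄¹λ¹(1−Y) − τ̄²λ²Y)^{−1} satisfies ‖I_Y(λ)‖ ≤ 1, and the map λ ↦ I_Y(λ) is holomorphic on 𝔻². -/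
open Complex Filter Set

section Aux

lemma scalar_re_nonneg (a b : ℂ) (ha : ‖a‖ ≤ 1) (hb : ‖b‖ ≤ 1) :
    0 ≤ ((1 - (starRingEnd ℂ b) * a) * (starRingEnd ℂ (1 - a)) * (1 - b)).re := by
  have hX : a.re ^ 2 + a.im ^ 2 ≤ 1 := by
    have := Complex.sq_norm a
    have h2 : ‖a‖ ≤ 1 := ha
    nlinarith [Complex.normSq_apply a, norm_nonneg a]
  have hY : b.re ^ 2 + b.im ^ 2 ≤ 1 := by
    have := Complex.sq_norm b
    have h2 : ‖b‖ ≤ 1 := hb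
    nlinarith [Complex.normSq_apply b, norm_nonneg b]
  simp only [Complex.mul_re, Complex.mul_im, Complex.sub_re, Complex.sub_im, Complex.one_re,
    Complex.one_im, Complex.conj_re, Complex.conj_im]
  nlinarith [mul_nonneg (by nlinarith : (0:ℝ) ≤ 1 - (b.re^2+b.im^2))
      (by nlinarith [sq_nonneg (1 - a.re), sq_nonneg a.im] :
        (0:ℝ) ≤ (1 + (a.re^2+a.im^2))/2 - a.re),
    mul_nonneg (by nlinarith : (0:ℝ) ≤ 1 - (a.re^2+a.im^2))
      (by nlinarith [sq_nonneg (1 - b.re), sq_nonneg b.im] :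
        (0:ℝ) ≤ (1 + (b.re^2+b.im^2))/2 - b.re)]

variable {M : Type*} [NormedAddCommGroup M] [InnerProductSpace ℂ M] [CompleteSpace M]

local notation "⟪" x ", " y "⟫" => @inner ℂ _ _ x y

omit [CompleteSpace M] in
lemma norm_comb_sq (a b : ℂ) (p q : M) :
    ‖a • p + b • q‖ ^ 2 = ‖a‖ ^ 2 * ‖p‖ ^ 2 + ‖b‖ ^ 2 * ‖q‖ ^ 2
      + 2 * ((starRingEnd ℂ a) * b * ⟪p, q⟫).re := by
  rw [norm_add_sq (𝕜 := ℂ)]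
  simp [norm_smul, inner_smul_left, inner_smul_right, mul_pow, mul_assoc]
  ring

lemma inner_AB (Y : M →L[ℂ] M) (hY : Y.IsPositive) (hY' : ((1 : M →L[ℂ] M) - Y).IsPositive)
    (x : M) : ∃ t : ℝ, 0 ≤ t ∧ ⟪((1 : M →L[ℂ] M) - Y) x, Y x⟫ = (t : ℂ) := by
  set A : M →L[ℂ] M := 1 - Y with hA
  have hAs : A.IsSymmetric := hY'.1
  have hBs : Y.IsSymmetric := hY.1
  have hsum : A x + Y x = x := by
    simp [hA, ContinuousLinearMap.sub_apply]
  have hcomm : A (Y x) = Y (A x) := by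
    simp [hA, ContinuousLinearMap.sub_apply, map_sub]
  have h1 : ⟪A x, Y x⟫ = ⟪x, A (Y x)⟫ := hAs x (Y x)
  have h2 : ⟪A x, Y x⟫ = ⟪Y (A x), x⟫ := (hBs (A x) x).symm
  have hreal : (starRingEnd ℂ) ⟪A x, Y x⟫ = ⟪A x, Y x⟫ := by
    calc (starRingEnd ℂ) ⟪A x, Y x⟫ = (starRingEnd ℂ) ⟪x, A (Y x)⟫ := by rw [h1]
    _ = ⟪A (Y x), x⟫ := inner_conj_symm _ _
    _ = ⟪Y (A x), x⟫ := by rw [hcomm]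
    _ = ⟪A x, Y x⟫ := h2.symm
  have hsplit : ⟪A x, Y x⟫ = ⟪Y (A x), A x⟫ + ⟪A (Y x), Y x⟫ := by
    rw [h2, hcomm, ← inner_add_right, hsum]
  refine ⟨(⟪A x, Y x⟫).re, ?_, ((Complex.conj_eq_iff_re.mp hreal)).symm⟩
  have p1 := hY.inner_nonneg_left (A x)
  have p2 := hY'.inner_nonneg_left (Y x)
  replace p1 := (Complex.nonneg_iff.mp p1).1; replace p2 := (Complex.nonneg_iff.mp p2).1
  rw [hsplit, Complex.add_re]
  linarith

end Aux

local notation "⟪" x ", " y "⟫" => @inner ℂ _ _ x y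

/-- The operator-valued rational function `I_Y(λ)` associated to a positive
contraction `Y` and a point `τ` of the torus. -/
noncomputable def IY {M : Type*} [NormedAddCommGroup M] [InnerProductSpace ℂ M]
    [CompleteSpace M] (Y : M →L[ℂ] M) (τ z : ℂ × ℂ) : M →L[ℂ] M :=
  ((starRingEnd ℂ τ.1 * z.1) • Y + (starRingEnd ℂ τ.2 * z.2) • ((1 : M →L[ℂ] M) - Y)
      - (starRingEnd ℂ τ.1 * starRingEnd ℂ τ.2 * z.1 * z.2) • (1 : M →L[ℂ] M)) *
    Ring.inverse ((1 : M →L[ℂ] M) - (starRingEnd ℂ τ.1 * z.1) • ((1 : M →L[ℂ] M) - Y)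
      - (starRingEnd ℂ τ.2 * z.2) • Y)

set_option maxHeartbeats 1000000 in
theorem stmt0 {M : Type*} [NormedAddCommGroup M] [InnerProductSpace ℂ M] [CompleteSpace M]
    (Y : M →L[ℂ] M) (hY : Y.IsPositive) (hY' : ((1 : M →L[ℂ] M) - Y).IsPositive)
    (τ : ℂ × ℂ) (hτ1 : ‖τ.1‖ = 1) (hτ2 : ‖τ.2‖ = 1) :
    (∀ z : ℂ × ℂ, ‖z‖ < 1 →
      ‖(starRingEnd ℂ τ.1 * z.1) • ((1 : M →L[ℂ] M) - Y) + (starRingEnd ℂ τ.2 * z.2) • Y‖ ≤ ‖z‖ ∧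
      IsUnit ((1 : M →L[ℂ] M) - (starRingEnd ℂ τ.1 * z.1) • ((1 : M →L[ℂ] M) - Y)
        - (starRingEnd ℂ τ.2 * z.2) • Y) ∧
      ‖IY Y τ z‖ ≤ 1) ∧
    DifferentiableOn ℂ (IY Y τ) {z : ℂ × ℂ | ‖z‖ < 1} := by
  have key : ∀ z : ℂ × ℂ, ‖z‖ < 1 →
      ‖(starRingEnd ℂ τ.1 * z.1) • ((1 : M →L[ℂ] M) - Y) + (starRingEnd ℂ τ.2 * z.2) • Y‖ ≤ ‖z‖ ∧
      IsUnit ((1 : M →L[ℂ] M) - (starRingEnd ℂ τ.1 * z.1) • ((1 : M →L[ℂ] M) - Y)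
        - (starRingEnd ℂ τ.2 * z.2) • Y) ∧
      ‖IY Y τ z‖ ≤ 1 := by
    intro z hz
    set a : ℂ := starRingEnd ℂ τ.1 * z.1 with ha_def
    set b : ℂ := starRingEnd ℂ τ.2 * z.2 with hb_def
    have hna : ‖a‖ ≤ ‖z‖ := by
      rw [ha_def, norm_mul, RCLike.norm_conj, hτ1, one_mul]
      exact norm_fst_le z
    have hnb : ‖b‖ ≤ ‖z‖ := by
      rw [hb_def, norm_mul, RCLike.norm_conj, hτ2, one_mul]
      exact norm_snd_le z
    have ha1 : ‖a‖ < 1 := lt_of_le_of_lt hna hz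
    have hb1 : ‖b‖ < 1 := lt_of_le_of_lt hnb hz
    have part1 : ‖a • ((1 : M →L[ℂ] M) - Y) + b • Y‖ ≤ ‖z‖ := by
      refine ContinuousLinearMap.opNorm_le_bound _ (norm_nonneg z) fun x => ?_
      obtain ⟨t, ht0, htc⟩ := inner_AB Y hY hY' x
      have happ : (a • ((1 : M →L[ℂ] M) - Y) + b • Y) x
          = a • (((1 : M →L[ℂ] M) - Y) x) + b • (Y x) := by
        simp [ContinuousLinearMap.add_apply]
      rw [happ]
      have h1 := norm_comb_sq a b (((1 : M →L[ℂ] M) - Y) x) (Y x)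
      rw [htc] at h1
      have hre : ((starRingEnd ℂ a) * b * (t : ℂ)).re ≤ ‖a‖ * ‖b‖ * t := by
        have h := Complex.re_le_norm ((starRingEnd ℂ a) * b * (t : ℂ))
        simpa [norm_mul, _root_.abs_of_nonneg ht0] using h
      have hsum : ((1 : M →L[ℂ] M) - Y) x + Y x = x := by
        simp [ContinuousLinearMap.sub_apply]
      have hx : ‖x‖ ^ 2 = ‖((1 : M →L[ℂ] M) - Y) x‖ ^ 2 + ‖Y x‖ ^ 2 + 2 * t := by
        conv_lhs => rw [← hsum]
        rw [norm_add_sq (𝕜 := ℂ), htc]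
        simp
        ring
      have m1 : ‖a‖ * ‖b‖ ≤ ‖z‖ * ‖z‖ := mul_le_mul hna hnb (norm_nonneg _) (norm_nonneg _)
      have m2 : ‖a‖ * ‖a‖ ≤ ‖z‖ * ‖z‖ := mul_le_mul hna hna (norm_nonneg _) (norm_nonneg _)
      have m3 : ‖b‖ * ‖b‖ ≤ ‖z‖ * ‖z‖ := mul_le_mul hnb hnb (norm_nonneg _) (norm_nonneg _)
      have hfin : ‖a • (((1 : M →L[ℂ] M) - Y) x) + b • (Y x)‖ ^ 2 ≤ (‖z‖ * ‖x‖) ^ 2 := by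
        rw [h1]
        nlinarith [hre, ht0, m1, m2, m3, hx, sq_nonneg ‖((1 : M →L[ℂ] M) - Y) x‖,
          sq_nonneg ‖Y x‖, norm_nonneg x, norm_nonneg z,
          mul_le_mul_of_nonneg_right m1 ht0]
      exact (pow_le_pow_iff_left₀ (norm_nonneg _)
        (mul_nonneg (norm_nonneg z) (norm_nonneg x)) two_ne_zero).mp hfin
    have part2 : IsUnit ((1 : M →L[ℂ] M) - a • ((1 : M →L[ℂ] M) - Y) - b • Y) := by
      rw [sub_sub]
      exact isUnit_one_sub_of_norm_lt_one (lt_of_le_of_lt part1 hz)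
    refine ⟨part1, part2, ?_⟩
    set D : M →L[ℂ] M := (1 : M →L[ℂ] M) - a • ((1 : M →L[ℂ] M) - Y) - b • Y with hD_def
    set N : M →L[ℂ] M := a • Y + b • ((1 : M →L[ℂ] M) - Y)
        - (starRingEnd ℂ τ.1 * starRingEnd ℂ τ.2 * z.1 * z.2) • (1 : M →L[ℂ] M) with hN_def
    have hIY : IY Y τ z = N * Ring.inverse D := rfl
    rw [hIY]
    obtain ⟨U, hU⟩ := part2
    rw [← hU, Ring.inverse_unit]
    refine ContinuousLinearMap.opNorm_le_bound _ zero_le_one fun v => ?_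
    rw [one_mul, ContinuousLinearMap.mul_apply]
    have hDu : D (((U⁻¹ : (M →L[ℂ] M)ˣ) : M →L[ℂ] M) v) = v := by
      rw [← hU]
      calc ((U : M →L[ℂ] M)) (((U⁻¹ : (M →L[ℂ] M)ˣ) : M →L[ℂ] M) v)
          = ((U : M →L[ℂ] M) * ((U⁻¹ : (M →L[ℂ] M)ˣ) : M →L[ℂ] M)) v := rfl
      _ = v := by rw [U.mul_inv]; exact ContinuousLinearMap.one_apply v
    set u : M := ((U⁻¹ : (M →L[ℂ] M)ˣ) : M →L[ℂ] M) v with hu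
    rw [← hDu]
    obtain ⟨t, ht0, htc⟩ := inner_AB Y hY hY' u
    set p : M := (1 - a) • (((1 : M →L[ℂ] M) - Y) u) with hp
    set q : M := (1 - b) • (Y u) with hq
    have hDu2 : D u = p + q := by
      simp only [hD_def, hp, hq, ContinuousLinearMap.sub_apply, ContinuousLinearMap.smul_apply,
        ContinuousLinearMap.one_apply]
      module
    have hab : starRingEnd ℂ τ.1 * starRingEnd ℂ τ.2 * z.1 * z.2 = a * b := by
      rw [ha_def, hb_def]; ring
    have hNu : N u = b • p + a • q := by
      simp only [hN_def, hab, hp, hq, ContinuousLinearMap.sub_apply,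
        ContinuousLinearMap.add_apply, ContinuousLinearMap.smul_apply,
        ContinuousLinearMap.one_apply]
      module
    rw [hNu, hDu2]
    have hpq : ⟪p, q⟫ = (starRingEnd ℂ (1 - a)) * (1 - b) * (t : ℂ) := by
      rw [hp, hq, inner_smul_left, inner_smul_right, htc]
      ring
    have h1 := norm_comb_sq b a p q
    have h2 : ‖p + q‖ ^ 2 = ‖p‖ ^ 2 + ‖q‖ ^ 2 + 2 * (⟪p, q⟫).re := by
      have h := norm_comb_sq 1 1 p q
      simpa using h
    have hs := scalar_re_nonneg a b ha1.le hb1.le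
    have hceq : ⟪p, q⟫ - (starRingEnd ℂ b) * a * ⟪p, q⟫
        = ((1 - (starRingEnd ℂ b) * a) * (starRingEnd ℂ (1 - a)) * (1 - b)) * (t : ℂ) := by
      rw [hpq]; ring
    have hcross : (⟪p, q⟫).re - ((starRingEnd ℂ b) * a * ⟪p, q⟫).re
        = ((1 - (starRingEnd ℂ b) * a) * (starRingEnd ℂ (1 - a)) * (1 - b)).re * t := by
      calc (⟪p, q⟫).re - ((starRingEnd ℂ b) * a * ⟪p, q⟫).re
          = (⟪p, q⟫ - (starRingEnd ℂ b) * a * ⟪p, q⟫).re := (Complex.sub_re _ _).symm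
      _ = (((1 - (starRingEnd ℂ b) * a) * (starRingEnd ℂ (1 - a)) * (1 - b)) * (t : ℂ)).re := by
          rw [hceq]
      _ = ((1 - (starRingEnd ℂ b) * a) * (starRingEnd ℂ (1 - a)) * (1 - b)).re * t := by
          simp [Complex.mul_re]
    have e1 : ‖a‖ ^ 2 ≤ 1 := pow_le_one₀ (norm_nonneg a) ha1.le
    have e2 : ‖b‖ ^ 2 ≤ 1 := pow_le_one₀ (norm_nonneg b) hb1.le
    have hfin : ‖b • p + a • q‖ ^ 2 ≤ ‖p + q‖ ^ 2 := by
      rw [h1, h2]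
      nlinarith [mul_nonneg hs ht0, e1, e2, sq_nonneg ‖p‖, sq_nonneg ‖q‖, hcross]
    exact (pow_le_pow_iff_left₀ (norm_nonneg _) (norm_nonneg _) two_ne_zero).mp hfin
  refine ⟨key, ?_⟩
  intro z hz
  apply DifferentiableAt.differentiableWithinAt
  have hz' : ‖z‖ < 1 := hz
  have hunit := (key z hz').2.1
  have hIYeq : IY Y τ = fun w : ℂ × ℂ =>
      ((starRingEnd ℂ τ.1 * w.1) • Y + (starRingEnd ℂ τ.2 * w.2) • ((1 : M →L[ℂ] M) - Y)
        - (starRingEnd ℂ τ.1 * starRingEnd ℂ τ.2 * w.1 * w.2) • (1 : M →L[ℂ] M)) *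
      Ring.inverse ((1 : M →L[ℂ] M) - (starRingEnd ℂ τ.1 * w.1) • ((1 : M →L[ℂ] M) - Y)
        - (starRingEnd ℂ τ.2 * w.2) • Y) := rfl
  rw [hIYeq]
  have dN : DifferentiableAt ℂ (fun w : ℂ × ℂ =>
      (starRingEnd ℂ τ.1 * w.1) • Y + (starRingEnd ℂ τ.2 * w.2) • ((1 : M →L[ℂ] M) - Y)
        - (starRingEnd ℂ τ.1 * starRingEnd ℂ τ.2 * w.1 * w.2) • (1 : M →L[ℂ] M)) z := by
    refine DifferentiableAt.sub (DifferentiableAt.add ?_ ?_) ?_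
    · exact ((differentiableAt_const _).mul differentiableAt_fst).smul_const Y
    · exact ((differentiableAt_const _).mul differentiableAt_snd).smul_const _
    · exact ((((differentiableAt_const _).mul differentiableAt_fst)).mul
        differentiableAt_snd).smul_const _
  have dD : DifferentiableAt ℂ (fun w : ℂ × ℂ =>
      (1 : M →L[ℂ] M) - (starRingEnd ℂ τ.1 * w.1) • ((1 : M →L[ℂ] M) - Y)
        - (starRingEnd ℂ τ.2 * w.2) • Y) z :=
    ((differentiableAt_const _).sub
      (((differentiableAt_const _).mul differentiableAt_fst).smul_const _)).sub
      (((differentiableAt_const _).mul differentiableAt_snd).smul_const _)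
  exact dN.mul (dD.inverse hunit)
end

section
/- Let M be a complex Hilbert space, Y a positive contraction on M, τ ∈ 𝕋², and δ ∈ ℂ² with Re(τ̄¹δ¹) < 0 and Re(τ̄²δ²) < 0. Then the operator B = τ²δ¹(1−Y) + τ¹δ²Y is invertible in B(M), and for every t > 0 such that τ + tδ ∈ 𝔻², one has I_Y(τ + tδ) = 1 + t·δ¹δ²·B^{−1}. In particular, lim_{t→0⁺} (I_Y(τ + tδ) − 1)/t = δ¹δ²·B^{−1} in operator norm. -/
open Complex Filter Set

/-- uniqueness of two sided inverse -/
lemma my_inverse_eq {R : Type*} [Ring R] {x y : R} (hx : IsUnit x) (h : x * y = 1) :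
    Ring.inverse x = y := by
  calc Ring.inverse x = Ring.inverse x * (x * y) := by rw [h, mul_one]
  _ = y := by rw [← mul_assoc, Ring.inverse_mul_cancel _ hx, one_mul]

lemma my_isUnit_smul {M : Type*} [NormedAddCommGroup M] [InnerProductSpace ℂ M]
    [CompleteSpace M] {c : ℂ} (hc : c ≠ 0) {A : M →L[ℂ] M} (hA : IsUnit A) :
    IsUnit (c • A) := by
  rw [Algebra.smul_def]
  exact ((isUnit_iff_ne_zero.2 hc).map (algebraMap ℂ (M →L[ℂ] M))).mul hA

/-- Coercivity : the operator `a•(1-Y) + b•Y` is invertible when `Re a, Re b < 0`. -/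
lemma my_isUnit_A {M : Type*} [NormedAddCommGroup M] [InnerProductSpace ℂ M]
    [CompleteSpace M] (Y : M →L[ℂ] M) (hY : Y.IsPositive)
    (hY' : ((1 : M →L[ℂ] M) - Y).IsPositive) {a b : ℂ} (ha : a.re < 0) (hb : b.re < 0) :
    IsUnit (a • ((1 : M →L[ℂ] M) - Y) + b • Y) := by
  set c : NNReal := ⟨min (-a.re) (-b.re), le_min (by linarith) (by linarith)⟩ with hc_def
  have hc : 0 < c := by
    rw [← NNReal.coe_pos]
    exact lt_min (by linarith) (by linarith)
  refine ContinuousLinearMap.isUnit_of_forall_le_norm_inner_map _ hc fun x => ?_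
  set q : ℂ := inner ℂ (Y x) x with hq
  set p : ℂ := inner ℂ (((1 : M →L[ℂ] M) - Y) x) x with hp
  have hq_im : q.im = 0 := by
    have h1 : (starRingEnd ℂ) q = q := by
      rw [hq, inner_conj_symm]
      exact (hY.1 x x).symm
    exact Complex.conj_eq_iff_im.mp h1
  have hp_im : p.im = 0 := by
    have h1 : (starRingEnd ℂ) p = p := by
      rw [hp, inner_conj_symm]
      exact (hY'.1 x x).symm
    exact Complex.conj_eq_iff_im.mp h1
  have hq_re : 0 ≤ q.re := hY.2 x
  have hp_re : 0 ≤ p.re := hY'.2 x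
  have hsum : p + q = (inner ℂ x x : ℂ) := by
    rw [hp, hq, ← inner_add_left]
    congr 1
    simp [ContinuousLinearMap.sub_apply, ContinuousLinearMap.one_apply, sub_add_cancel]
  have hz : (inner ℂ ((a • ((1 : M →L[ℂ] M) - Y) + b • Y) x) x : ℂ)
      = (starRingEnd ℂ a) * p + (starRingEnd ℂ b) * q := by
    simp [inner_add_left, inner_smul_left, hp, hq]; ring
  have hre : (inner ℂ ((a • ((1 : M →L[ℂ] M) - Y) + b • Y) x) x : ℂ).re
      = a.re * p.re + b.re * q.re := by
    rw [hz]
    simp [Complex.add_re, Complex.mul_re, Complex.conj_re, Complex.conj_im, hq_im, hp_im]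
  have habs : |(inner ℂ ((a • ((1 : M →L[ℂ] M) - Y) + b • Y) x) x : ℂ).re|
      ≤ ‖(inner ℂ ((a • ((1 : M →L[ℂ] M) - Y) + b • Y) x) x : ℂ)‖ := by
    exact Complex.abs_re_le_norm _
  have hsum_re : p.re + q.re = ‖x‖ ^ 2 := by
    have h2 := congrArg Complex.re hsum
    rw [Complex.add_re] at h2
    rw [h2]
    simpa using inner_self_eq_norm_sq (𝕜 := ℂ) x
  have hc1 : (c : ℝ) ≤ -a.re := min_le_left _ _
  have hc2 : (c : ℝ) ≤ -b.re := min_le_right _ _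
  have key : ‖x‖ ^ 2 * (c : ℝ) ≤ -(a.re * p.re + b.re * q.re) := by nlinarith
  calc ‖x‖ ^ 2 * (c : ℝ) ≤ -(a.re * p.re + b.re * q.re) := key
  _ ≤ |(inner ℂ ((a • ((1 : M →L[ℂ] M) - Y) + b • Y) x) x : ℂ).re| := by
      rw [hre]; exact neg_le_abs _
  _ ≤ _ := habs

lemma my_norm_add_lt (z d : ℂ) (hz : ‖z‖ = 1) (_hd : ((starRingEnd ℂ) z * d).re < 0)
    {t : ℝ} (ht : 0 < t) (ht' : t * (Complex.normSq d + 1) < -(2 * ((starRingEnd ℂ) z * d).re)) :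
    ‖z + (t : ℂ) * d‖ < 1 := by
  have hz2 : Complex.normSq z = 1 := by
    rw [← Complex.sq_norm, hz, one_pow]
  have hre : (z * (starRingEnd ℂ) ((t : ℂ) * d)).re = t * (((starRingEnd ℂ) z) * d).re := by
    simp [Complex.mul_re, Complex.conj_re, Complex.conj_im, Complex.mul_im]
    ring
  have h2 : Complex.normSq (z + (t : ℂ) * d) < 1 := by
    rw [Complex.normSq_add, hz2, hre]
    have : Complex.normSq ((t : ℂ) * d) = t * t * Complex.normSq d := by
      rw [Complex.normSq_mul, Complex.normSq_ofReal]
    rw [this]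
    nlinarith [Complex.normSq_nonneg d]
  have h3 : ‖z + (t : ℂ) * d‖ ^ 2 = Complex.normSq (z + (t : ℂ) * d) := by
    rw [Complex.sq_norm]
  nlinarith [norm_nonneg (z + (t : ℂ) * d)]

theorem stmt2 {M : Type*} [NormedAddCommGroup M] [InnerProductSpace ℂ M] [CompleteSpace M]
    (Y : M →L[ℂ] M) (hY : Y.IsPositive) (hY' : ((1 : M →L[ℂ] M) - Y).IsPositive)
    (τ : ℂ × ℂ) (hτ1 : ‖τ.1‖ = 1) (hτ2 : ‖τ.2‖ = 1)
    (δ : ℂ × ℂ) (hδ1 : (starRingEnd ℂ τ.1 * δ.1).re < 0)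
    (hδ2 : (starRingEnd ℂ τ.2 * δ.2).re < 0) :
    IsUnit ((τ.2 * δ.1) • ((1 : M →L[ℂ] M) - Y) + (τ.1 * δ.2) • Y) ∧
    (∀ t : ℝ, 0 < t → ‖(τ.1 + (t : ℂ) * δ.1, τ.2 + (t : ℂ) * δ.2)‖ < 1 →
      IY Y τ (τ.1 + (t : ℂ) * δ.1, τ.2 + (t : ℂ) * δ.2) =
        1 + ((t : ℂ) * δ.1 * δ.2) •
          Ring.inverse ((τ.2 * δ.1) • ((1 : M →L[ℂ] M) - Y) + (τ.1 * δ.2) • Y)) ∧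
    Tendsto (fun t : ℝ => t⁻¹ • (IY Y τ (τ.1 + (t : ℂ) * δ.1, τ.2 + (t : ℂ) * δ.2) - 1))
      (nhdsWithin (0 : ℝ) (Set.Ioi 0))
      (nhds ((δ.1 * δ.2) •
        Ring.inverse ((τ.2 * δ.1) • ((1 : M →L[ℂ] M) - Y) + (τ.1 * δ.2) • Y))) := by
  set a : ℂ := starRingEnd ℂ τ.1 * δ.1 with ha_def
  set b : ℂ := starRingEnd ℂ τ.2 * δ.2 with hb_def
  set A : M →L[ℂ] M := a • ((1 : M →L[ℂ] M) - Y) + b • Y with hA_def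
  set B : M →L[ℂ] M := (τ.2 * δ.1) • ((1 : M →L[ℂ] M) - Y) + (τ.1 * δ.2) • Y with hB_def
  have hτ1' : τ.1 ≠ 0 := by intro h; rw [h] at hτ1; simp at hτ1
  have hτ2' : τ.2 ≠ 0 := by intro h; rw [h] at hτ2; simp at hτ2
  have h1 : starRingEnd ℂ τ.1 * τ.1 = 1 := by
    rw [mul_comm, Complex.mul_conj']
    rw [hτ1]; norm_num
  have h2 : starRingEnd ℂ τ.2 * τ.2 = 1 := by
    rw [mul_comm, Complex.mul_conj']
    rw [hτ2]; norm_num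
  have hA : IsUnit A := my_isUnit_A Y hY hY' hδ1 hδ2
  have hBA : B = (τ.1 * τ.2) • A := by
    rw [hA_def, hB_def, smul_add, smul_smul, smul_smul]
    have e1 : τ.1 * τ.2 * a = τ.2 * δ.1 := by
      rw [ha_def]; linear_combination τ.2 * δ.1 * h1
    have e2 : τ.1 * τ.2 * b = τ.1 * δ.2 := by
      rw [hb_def]; linear_combination τ.1 * δ.2 * h2
    rw [e1, e2]
  have hB : IsUnit B := by
    rw [hBA]; exact my_isUnit_smul (mul_ne_zero hτ1' hτ2') hA
  have hinvB : Ring.inverse B = (starRingEnd ℂ τ.1 * starRingEnd ℂ τ.2) • Ring.inverse A := by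
    apply my_inverse_eq hB
    rw [hBA, smul_mul_smul_comm]
    have : τ.1 * τ.2 * (starRingEnd ℂ τ.1 * starRingEnd ℂ τ.2) = 1 := by
      linear_combination (τ.2 * starRingEnd ℂ τ.2) * h1 + h2
    rw [this, one_smul, Ring.mul_inverse_cancel _ hA]
  -- the main formula
  have main : ∀ t : ℝ, 0 < t →
      IY Y τ (τ.1 + (t : ℂ) * δ.1, τ.2 + (t : ℂ) * δ.2) =
        1 + ((t : ℂ) * a * b) • Ring.inverse A := by
    intro t ht
    have htC : (t : ℂ) ≠ 0 := Complex.ofReal_ne_zero.2 (ne_of_gt ht)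
    have hs1 : starRingEnd ℂ τ.1 * (τ.1 + (t : ℂ) * δ.1) = 1 + (t : ℂ) * a := by
      rw [mul_add, h1, ha_def]; ring
    have hs2 : starRingEnd ℂ τ.2 * (τ.2 + (t : ℂ) * δ.2) = 1 + (t : ℂ) * b := by
      rw [mul_add, h2, hb_def]; ring
    have hs3 : starRingEnd ℂ τ.1 * starRingEnd ℂ τ.2 * (τ.1 + (t : ℂ) * δ.1)
        * (τ.2 + (t : ℂ) * δ.2) = (1 + (t : ℂ) * a) * (1 + (t : ℂ) * b) := by
      rw [← hs1, ← hs2]; ring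
    have hD : (1 : M →L[ℂ] M)
        - (starRingEnd ℂ τ.1 * (τ.1 + (t : ℂ) * δ.1)) • ((1 : M →L[ℂ] M) - Y)
        - (starRingEnd ℂ τ.2 * (τ.2 + (t : ℂ) * δ.2)) • Y = (-(t : ℂ)) • A := by
      rw [hs1, hs2, hA_def]
      module
    have hN : (starRingEnd ℂ τ.1 * (τ.1 + (t : ℂ) * δ.1)) • Y
        + (starRingEnd ℂ τ.2 * (τ.2 + (t : ℂ) * δ.2)) • ((1 : M →L[ℂ] M) - Y)
        - (starRingEnd ℂ τ.1 * starRingEnd ℂ τ.2 * (τ.1 + (t : ℂ) * δ.1)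
            * (τ.2 + (t : ℂ) * δ.2)) • (1 : M →L[ℂ] M)
        = (-(t : ℂ)) • (A + ((t : ℂ) * a * b) • (1 : M →L[ℂ] M)) := by
      rw [hs1, hs2, hs3, hA_def]
      module
    have hinvD : Ring.inverse ((1 : M →L[ℂ] M)
        - (starRingEnd ℂ τ.1 * (τ.1 + (t : ℂ) * δ.1)) • ((1 : M →L[ℂ] M) - Y)
        - (starRingEnd ℂ τ.2 * (τ.2 + (t : ℂ) * δ.2)) • Y)
        = ((-(t : ℂ))⁻¹) • Ring.inverse A := by
      rw [hD]
      apply my_inverse_eq (my_isUnit_smul (neg_ne_zero.2 htC) hA)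
      rw [smul_mul_smul_comm, mul_inv_cancel₀ (neg_ne_zero.2 htC), one_smul,
        Ring.mul_inverse_cancel _ hA]
    rw [IY]
    rw [hN, hinvD, smul_mul_smul_comm, mul_inv_cancel₀ (neg_ne_zero.2 htC), one_smul,
      add_mul, Ring.mul_inverse_cancel _ hA, smul_mul_assoc, one_mul]
  refine ⟨hB, fun t ht _ => ?_, ?_⟩
  · rw [main t ht, hinvB, smul_smul]
    congr 2
    rw [ha_def, hb_def]; ring
  · -- limit
    set L : M →L[ℂ] M := (δ.1 * δ.2) • Ring.inverse B with hL_def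
    have hεa : 0 < -(2 * a.re) / (Complex.normSq δ.1 + 1) := by
      apply div_pos (by linarith) (by nlinarith [Complex.normSq_nonneg δ.1])
    have hεb : 0 < -(2 * b.re) / (Complex.normSq δ.2 + 1) := by
      apply div_pos (by linarith) (by nlinarith [Complex.normSq_nonneg δ.2])
    set ε := min (-(2 * a.re) / (Complex.normSq δ.1 + 1))
      (-(2 * b.re) / (Complex.normSq δ.2 + 1)) with hε_def
    have hε : 0 < ε := lt_min hεa hεb
    have hev : ∀ᶠ t : ℝ in nhdsWithin (0 : ℝ) (Set.Ioi 0),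
        t⁻¹ • (IY Y τ (τ.1 + (t : ℂ) * δ.1, τ.2 + (t : ℂ) * δ.2) - 1) = L := by
      filter_upwards [Ioo_mem_nhdsGT_of_mem (show (0:ℝ) ∈ Ico 0 ε from ⟨le_refl _, hε⟩)]
        with t htm
      obtain ⟨ht, htε⟩ := htm
      have htC : (t : ℂ) ≠ 0 := Complex.ofReal_ne_zero.2 (ne_of_gt ht)
      rw [main t ht, add_sub_cancel_left, hL_def, hinvB, smul_smul, ← smul_assoc]
      congr 1
      rw [Complex.real_smul, Complex.ofReal_inv, ha_def, hb_def]
      field_simp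
    exact Tendsto.congr' (hev.mono fun t h => h.symm) tendsto_const_nhds
end

section
/- Let τ ∈ 𝕋² and y ∈ (0,1). Then τ is a carapoint for φ_y, i.e. there is a sequence λ_n ∈ 𝔻² tending to τ with (1 − |φ_y(λ_n)|)/(1 − ‖λ_n‖_∞) bounded; but φ_y is not nontangentially differentiable at τ: there exist no w ∈ ℂ and ℂ-linear map L : ℂ² → ℂ such that for every δ ∈ ℂ² with Re(τ̄¹δ¹) < 0 and Re(τ̄²δ²) < 0 the limit lim_{t→0⁺} (φ_y(τ+tδ) − w)/t exists and equals L(δ). -/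
open Complex Filter Set

/-- The scalar rational inner function `φ_y` associated to `τ ∈ 𝕋²` and `y ∈ [0,1]`. -/
noncomputable def phiy (τ : ℂ × ℂ) (y : ℝ) (z : ℂ × ℂ) : ℂ :=
  (starRingEnd ℂ τ.1 * z.1 * (y : ℂ) + starRingEnd ℂ τ.2 * z.2 * (1 - (y : ℂ))
      - starRingEnd ℂ τ.1 * starRingEnd ℂ τ.2 * z.1 * z.2) /
    (1 - starRingEnd ℂ τ.1 * z.1 * (1 - (y : ℂ)) - starRingEnd ℂ τ.2 * z.2 * (y : ℂ))

lemma conj_self_one (z : ℂ) (h : ‖z‖ = 1) : starRingEnd ℂ z * z = 1 := by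
  rw [Complex.conj_mul']
  norm_cast
  simp [h]

lemma phiy_diag (τ : ℂ × ℂ) (h1 : starRingEnd ℂ τ.1 * τ.1 = 1)
    (h2 : starRingEnd ℂ τ.2 * τ.2 = 1) (y : ℝ) (r : ℝ) (hr : (1:ℂ) - r ≠ 0) :
    phiy τ y ((r:ℂ) * τ.1, (r:ℂ) * τ.2) = (r:ℂ) := by
  have h12 : (starRingEnd ℂ τ.1 * τ.1) * (starRingEnd ℂ τ.2 * τ.2) = 1 := by
    rw [h1, h2, one_mul]
  have hD : 1 - starRingEnd ℂ τ.1 * ((r:ℂ) * τ.1) * (1 - (y : ℂ))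
      - starRingEnd ℂ τ.2 * ((r:ℂ) * τ.2) * (y : ℂ) = 1 - (r:ℂ) := by
    linear_combination (-(r:ℂ) * (1 - (y:ℂ))) * h1 + (-(r:ℂ) * (y:ℂ)) * h2
  simp only [phiy]
  rw [hD, div_eq_iff hr]
  linear_combination ((r:ℂ) * (y:ℂ)) * h1 + ((r:ℂ) * (1 - (y:ℂ))) * h2 - ((r:ℂ)^2) * h12

lemma phiy_ray (τ : ℂ × ℂ) (h1 : starRingEnd ℂ τ.1 * τ.1 = 1)
    (h2 : starRingEnd ℂ τ.2 * τ.2 = 1) (y : ℝ) (δ : ℂ × ℂ) (A B : ℂ)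
    (ha : starRingEnd ℂ τ.1 * δ.1 = A) (hb : starRingEnd ℂ τ.2 * δ.2 = B)
    (t : ℂ) (ht : t ≠ 0) (hs : A * (1 - (y:ℂ)) + B * (y:ℂ) ≠ 0) :
    phiy τ y (τ.1 + t * δ.1, τ.2 + t * δ.2)
      = 1 + t * (A * B) / (A * (1 - (y:ℂ)) + B * (y:ℂ)) := by
  set s := A * (1 - (y:ℂ)) + B * (y:ℂ) with hsdef
  have h12 : (starRingEnd ℂ τ.1 * τ.1) * (starRingEnd ℂ τ.2 * τ.2) = 1 := by
    rw [h1, h2, one_mul]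
  have haτ2 : (starRingEnd ℂ τ.1 * δ.1) * (starRingEnd ℂ τ.2 * τ.2) = A := by
    rw [ha, h2, mul_one]
  have hτ1b : (starRingEnd ℂ τ.1 * τ.1) * (starRingEnd ℂ τ.2 * δ.2) = B := by
    rw [h1, hb, one_mul]
  have hab : (starRingEnd ℂ τ.1 * δ.1) * (starRingEnd ℂ τ.2 * δ.2) = A * B := by
    rw [ha, hb]
  have hD : 1 - starRingEnd ℂ τ.1 * (τ.1 + t * δ.1) * (1 - (y : ℂ))
      - starRingEnd ℂ τ.2 * (τ.2 + t * δ.2) * (y : ℂ) = -(t * s) := by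
    linear_combination (-(1 - (y:ℂ))) * h1 + (-(y:ℂ)) * h2 + (-t * (1 - (y:ℂ))) * ha + (-t*(y:ℂ)) * hb
  have hDne : -(t * s) ≠ 0 := by simpa using mul_ne_zero ht hs
  have hexp : (1 + t * (A * B) / s) * (-(t * s)) = -(t * s) - t^2 * (A * B) := by
    field_simp
    ring
  simp only [phiy]
  rw [hD, div_eq_iff hDne, hexp]
  linear_combination (y:ℂ)*h1 + t*(y:ℂ)*ha + (1-(y:ℂ))*h2 + t*(1-(y:ℂ))*hb - h12 - t*haτ2 - t*hτ1b - t^2*hab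

theorem stmt8 (τ : ℂ × ℂ) (hτ1 : ‖τ.1‖ = 1) (hτ2 : ‖τ.2‖ = 1)
    (y : ℝ) (hy0 : 0 < y) (hy1 : y < 1) :
    -- `τ` is a carapoint for `φ_y`
    (∃ (l : ℕ → ℂ × ℂ) (C : ℝ), (∀ n, ‖l n‖ < 1) ∧ Tendsto l atTop (nhds τ) ∧
      ∀ n, |(1 - ‖phiy τ y (l n)‖) / (1 - ‖l n‖)| ≤ C) ∧
    -- but `φ_y` is not nontangentially differentiable at `τ`
    ¬ ∃ (w : ℂ) (L : (ℂ × ℂ) →ₗ[ℂ] ℂ), ∀ δ : ℂ × ℂ,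
        (starRingEnd ℂ τ.1 * δ.1).re < 0 → (starRingEnd ℂ τ.2 * δ.2).re < 0 →
        Tendsto (fun t : ℝ =>
            (phiy τ y (τ.1 + (t : ℂ) * δ.1, τ.2 + (t : ℂ) * δ.2) - w) / (t : ℂ))
          (nhdsWithin (0 : ℝ) (Set.Ioi 0)) (nhds (L δ)) := by
  have h1 := conj_self_one τ.1 hτ1
  have h2 := conj_self_one τ.2 hτ2
  constructor
  · -- carapoint
    set r : ℕ → ℝ := fun n => (n:ℝ)/(n+1) with hrdef
    have hr0 : ∀ n, 0 ≤ r n := fun n => by positivity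
    have hr1 : ∀ n, r n < 1 := fun n => by
      rw [hrdef]
      rw [div_lt_one (by positivity)]
      linarith
    have hnorm : ∀ n, ‖((((r n):ℝ):ℂ) * τ.1, (((r n):ℝ):ℂ) * τ.2)‖ = r n := by
      intro n
      simp [Prod.norm_def, norm_mul, hτ1, hτ2, Complex.norm_real, _root_.abs_of_nonneg (hr0 n)]
    refine ⟨fun n => ((((r n):ℝ):ℂ) * τ.1, (((r n):ℝ):ℂ) * τ.2), 1, ?_, ?_, ?_⟩
    · intro n; rw [hnorm n]; exact hr1 n
    · have hrt : Tendsto r atTop (nhds (1:ℝ)) := tendsto_natCast_div_add_atTop 1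
      have hct : Tendsto (fun n => (((r n):ℝ):ℂ)) atTop (nhds 1) := by
        have := (Complex.continuous_ofReal.tendsto 1).comp hrt
        simpa [Function.comp_def] using this
      have := (hct.mul_const τ.1).prodMk_nhds (hct.mul_const τ.2)
      simpa using this
    · intro n
      have hne : (1:ℂ) - ((r n : ℝ):ℂ) ≠ 0 := by
        rw [sub_ne_zero]
        exact fun h => absurd (Complex.ofReal_inj.mp h.symm) (hr1 n).ne
      rw [hnorm n, phiy_diag τ h1 h2 y (r n) hne]
      rw [Complex.norm_real, Real.norm_eq_abs, _root_.abs_of_nonneg (hr0 n),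
        div_self (by intro h; nlinarith [hr1 n] : (1:ℝ) - r n ≠ 0)]
      simp
  · rintro ⟨w, L, hL⟩
    -- basic positivity
    have hDen : ∀ c d : ℝ, 0 < c → 0 < d → (0:ℝ) < c*(1-y)+d*y := by
      intro c d hc hd; nlinarith
    have hphi : ∀ c d : ℝ, 0 < c → 0 < d → ∀ t : ℝ, 0 < t →
        phiy τ y (τ.1 + (t:ℂ) * (-(c:ℂ)*τ.1), τ.2 + (t:ℂ) * (-(d:ℂ)*τ.2))
          = 1 - (t:ℂ) * ((c*d/(c*(1-y)+d*y) : ℝ):ℂ) := by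
      intro c d hc hd t ht
      have hsden : ((c*(1-y)+d*y : ℝ):ℂ) ≠ 0 := Complex.ofReal_ne_zero.mpr (hDen c d hc hd).ne'
      have hseq : (-(c:ℂ)) * (1 - (y:ℂ)) + (-(d:ℂ)) * (y:ℂ) = -((c*(1-y)+d*y : ℝ):ℂ) := by
        push_cast; ring
      have hs : (-(c:ℂ)) * (1 - (y:ℂ)) + (-(d:ℂ)) * (y:ℂ) ≠ 0 := by
        rw [hseq]; exact neg_ne_zero.mpr hsden
      have ha : starRingEnd ℂ τ.1 * (-(c:ℂ)*τ.1) = -(c:ℂ) := by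
        linear_combination (-(c:ℂ)) * h1
      have hb : starRingEnd ℂ τ.2 * (-(d:ℂ)*τ.2) = -(d:ℂ) := by
        linear_combination (-(d:ℂ)) * h2
      rw [phiy_ray τ h1 h2 y (-(c:ℂ)*τ.1, -(d:ℂ)*τ.2) (-(c:ℂ)) (-(d:ℂ)) ha hb (t:ℂ)
        (Complex.ofReal_ne_zero.mpr ht.ne') hs]
      rw [show (-(c:ℂ))*(-(d:ℂ)) = (c:ℂ)*(d:ℂ) from by ring, hseq, div_neg]
      push_cast
      ring
    have main : ∀ c d : ℝ, 0 < c → 0 < d →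
        Tendsto (fun t : ℝ =>
            (phiy τ y (τ.1 + (t:ℂ) * (-(c:ℂ)*τ.1), τ.2 + (t:ℂ) * (-(d:ℂ)*τ.2)) - w) / (t:ℂ))
          (nhdsWithin (0:ℝ) (Set.Ioi 0)) (nhds (L (-(c:ℂ)*τ.1, -(d:ℂ)*τ.2))) := by
      intro c d hc hd
      have ha : starRingEnd ℂ τ.1 * (-(c:ℂ)*τ.1) = -(c:ℂ) := by
        linear_combination (-(c:ℂ)) * h1
      have hb : starRingEnd ℂ τ.2 * (-(d:ℂ)*τ.2) = -(d:ℂ) := by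
        linear_combination (-(d:ℂ)) * h2
      have hre1 : (starRingEnd ℂ τ.1 * ((-(c:ℂ)*τ.1, -(d:ℂ)*τ.2) : ℂ × ℂ).1).re < 0 := by
        simp only [ha]; simpa using hc
      have hre2 : (starRingEnd ℂ τ.2 * ((-(c:ℂ)*τ.1, -(d:ℂ)*τ.2) : ℂ × ℂ).2).re < 0 := by
        simp only [hb]; simpa using hd
      exact hL (-(c:ℂ)*τ.1, -(d:ℂ)*τ.2) hre1 hre2
    have h0 : Tendsto (fun t : ℝ => (t:ℂ)) (nhdsWithin (0:ℝ) (Set.Ioi 0)) (nhds 0) := by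
      have h : Tendsto (fun t : ℝ => (t:ℂ)) (nhds 0) (nhds 0) := by
        simpa using Complex.continuous_ofReal.tendsto 0
      exact h.mono_left nhdsWithin_le_nhds
    -- w = 1
    have hw1 : w = 1 := by
      have hT := main 1 1 one_pos one_pos
      have hmul := hT.mul h0
      have heq : (fun t : ℝ =>
          (phiy τ y (τ.1 + (t:ℂ) * (-((1:ℝ):ℂ)*τ.1), τ.2 + (t:ℂ) * (-((1:ℝ):ℂ)*τ.2)) - w) / (t:ℂ) * (t:ℂ))
          =ᶠ[nhdsWithin (0:ℝ) (Set.Ioi 0)]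
          (fun t : ℝ => 1 - (t:ℂ) * ((1*1/(1*(1-y)+1*y) : ℝ):ℂ) - w) := by
        filter_upwards [self_mem_nhdsWithin] with t ht
        rw [div_mul_cancel₀ _ (Complex.ofReal_ne_zero.mpr (ne_of_gt ht)),
          hphi 1 1 one_pos one_pos t ht]
      have hlim2 : Tendsto (fun t : ℝ => 1 - (t:ℂ) * ((1*1/(1*(1-y)+1*y) : ℝ):ℂ) - w)
          (nhdsWithin (0:ℝ) (Set.Ioi 0)) (nhds (1 - w)) := by
        have ha : Tendsto (fun t : ℝ => (1:ℂ) - (t:ℂ) * ((1*1/(1*(1-y)+1*y) : ℝ):ℂ))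
            (nhdsWithin (0:ℝ) (Set.Ioi 0)) (nhds 1) := by
          simpa using (h0.mul_const ((1*1/(1*(1-y)+1*y) : ℝ):ℂ)).const_sub (1:ℂ)
        simpa using ha.sub_const w
      have := tendsto_nhds_unique (hmul.congr' heq) hlim2
      rw [mul_zero] at this
      linear_combination this
    subst hw1
    -- key evaluation of L
    have key : ∀ c d : ℝ, 0 < c → 0 < d →
        L (-(c:ℂ)*τ.1, -(d:ℂ)*τ.2) = -((c*d/(c*(1-y)+d*y) : ℝ):ℂ) := by
      intro c d hc hd
      have hT := main c d hc hd
      have heq : (fun t : ℝ =>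
          (phiy τ y (τ.1 + (t:ℂ) * (-(c:ℂ)*τ.1), τ.2 + (t:ℂ) * (-(d:ℂ)*τ.2)) - 1) / (t:ℂ))
          =ᶠ[nhdsWithin (0:ℝ) (Set.Ioi 0)]
          (fun _ : ℝ => -((c*d/(c*(1-y)+d*y) : ℝ):ℂ)) := by
        filter_upwards [self_mem_nhdsWithin] with t ht
        rw [hphi c d hc hd t ht, div_eq_iff (Complex.ofReal_ne_zero.mpr (ne_of_gt ht))]
        ring
      exact tendsto_nhds_unique (hT.congr' heq) tendsto_const_nhds
    have e1 := key 1 1 one_pos one_pos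
    have e2 := key 2 1 two_pos one_pos
    have e3 := key 1 2 one_pos two_pos
    have hadd : ((-((2:ℝ):ℂ)*τ.1, -((1:ℝ):ℂ)*τ.2) : ℂ × ℂ) + (-((1:ℝ):ℂ)*τ.1, -((2:ℝ):ℂ)*τ.2)
        = (3:ℂ) • ((-((1:ℝ):ℂ)*τ.1, -((1:ℝ):ℂ)*τ.2) : ℂ × ℂ) := by
      refine Prod.ext ?_ ?_ <;> simp [Prod.smul_def] <;> push_cast <;> ring
    have hsum := L.map_add (-((2:ℝ):ℂ)*τ.1, -((1:ℝ):ℂ)*τ.2) (-((1:ℝ):ℂ)*τ.1, -((2:ℝ):ℂ)*τ.2)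
    have hsmul := L.map_smul (3:ℂ) ((-((1:ℝ):ℂ)*τ.1, -((1:ℝ):ℂ)*τ.2) : ℂ × ℂ)
    have hEq : -(((2*1/(2*(1-y)+1*y)):ℝ):ℂ) + -(((1*2/(1*(1-y)+2*y)):ℝ):ℂ)
        = (3:ℂ) * -(((1*1/(1*(1-y)+1*y)):ℝ):ℂ) := by
      rw [← e2, ← e3, ← hsum, hadd, hsmul, e1, smul_eq_mul]
    have hEqR : -((2*1/(2*(1-y)+1*y)):ℝ) + -((1*2/(1*(1-y)+2*y)):ℝ)
        = 3 * -((1*1/(1*(1-y)+1*y)):ℝ) := by exact_mod_cast hEq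
    have p1 : (0:ℝ) < 2*(1-y)+y := by nlinarith
    have p2 : (0:ℝ) < 1-y+2*y := by nlinarith
    field_simp [p1.ne', p2.ne'] at hEqR
    nlinarith [mul_pos hy0 (sub_pos.mpr hy1), hy0, hy1]
end

section
/- Let τ ∈ 𝕋² and y ∈ (0,1). Then for all λ, μ ∈ 𝔻², 1 − conj(φ_y(μ))·φ_y(λ) = (1 − conj(μ¹)λ¹)·conj(u¹_{y,μ})·u¹_{y,λ} + (1 − conj(μ²)λ²)·conj(u²_{y,μ})·u²_{y,λ}, where u¹_{y,λ} = √y(1 − τ̄²λ²)/(1 − τ̄¹λ¹(1−y) − τ̄²λ²y) and u²_{y,λ} = √(1−y)(1 − τ̄¹λ¹)/(1 − τ̄¹λ¹(1−y) − τ̄²λ²y). That is, (ℂ², u_y) is a Hilbert space model for φ_y. -/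
open Complex Filter Set

/-- First component of the model vector `u_{y,λ}` for `φ_y`. -/
noncomputable def u1 (τ : ℂ × ℂ) (y : ℝ) (z : ℂ × ℂ) : ℂ :=
  (Real.sqrt y : ℂ) * (1 - starRingEnd ℂ τ.2 * z.2) /
    (1 - starRingEnd ℂ τ.1 * z.1 * (1 - (y : ℂ)) - starRingEnd ℂ τ.2 * z.2 * (y : ℂ))

/-- Second component of the model vector `u_{y,λ}` for `φ_y`. -/
noncomputable def u2 (τ : ℂ × ℂ) (y : ℝ) (z : ℂ × ℂ) : ℂ :=
  (Real.sqrt (1 - y) : ℂ) * (1 - starRingEnd ℂ τ.1 * z.1) /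
    (1 - starRingEnd ℂ τ.1 * z.1 * (1 - (y : ℂ)) - starRingEnd ℂ τ.2 * z.2 * (y : ℂ))


private lemma denom_ne_zero (τ : ℂ × ℂ) (hτ1 : ‖τ.1‖ = 1) (hτ2 : ‖τ.2‖ = 1)
    (y : ℝ) (hy0 : 0 < y) (hy1 : y < 1) (z : ℂ × ℂ) (hz : ‖z‖ < 1) :
    1 - starRingEnd ℂ τ.1 * z.1 * (1 - (y : ℂ)) - starRingEnd ℂ τ.2 * z.2 * (y : ℂ) ≠ 0 := by
  have h1 : ‖z.1‖ < 1 := lt_of_le_of_lt (norm_fst_le z) hz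
  have h2 : ‖z.2‖ < 1 := lt_of_le_of_lt (norm_snd_le z) hz
  intro h
  have heq : starRingEnd ℂ τ.1 * z.1 * (1 - (y : ℂ)) + starRingEnd ℂ τ.2 * z.2 * (y : ℂ) = 1 := by
    linear_combination -h
  have hnorm := congrArg norm heq
  rw [norm_one] at hnorm
  have hb : ‖starRingEnd ℂ τ.1 * z.1 * (1 - (y : ℂ)) + starRingEnd ℂ τ.2 * z.2 * (y : ℂ)‖ < 1 := by
    calc ‖starRingEnd ℂ τ.1 * z.1 * (1 - (y : ℂ)) + starRingEnd ℂ τ.2 * z.2 * (y : ℂ)‖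
        ≤ ‖starRingEnd ℂ τ.1 * z.1 * (1 - (y : ℂ))‖ + ‖starRingEnd ℂ τ.2 * z.2 * (y : ℂ)‖ :=
          norm_add_le _ _
      _ = ‖z.1‖ * (1 - y) + ‖z.2‖ * y := by
          simp [norm_mul, hτ1, hτ2, Complex.norm_real]
          rw [show (1 - (y:ℂ)) = ((1-y:ℝ):ℂ) by push_cast; ring, Complex.norm_real, Real.norm_eq_abs,
            abs_of_pos (by linarith : (0:ℝ) < 1 - y), abs_of_pos hy0]
      _ < 1 * (1 - y) + 1 * y := by nlinarith
      _ = 1 := by ring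
  linarith

set_option maxHeartbeats 1000000 in
theorem stmt9 (τ : ℂ × ℂ) (hτ1 : ‖τ.1‖ = 1) (hτ2 : ‖τ.2‖ = 1)
    (y : ℝ) (hy0 : 0 < y) (hy1 : y < 1) :
    ∀ zl zm : ℂ × ℂ, ‖zl‖ < 1 → ‖zm‖ < 1 →
      1 - starRingEnd ℂ (phiy τ y zm) * phiy τ y zl =
        (1 - starRingEnd ℂ zm.1 * zl.1) * starRingEnd ℂ (u1 τ y zm) * u1 τ y zl +
        (1 - starRingEnd ℂ zm.2 * zl.2) * starRingEnd ℂ (u2 τ y zm) * u2 τ y zl := by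
  intro zl zm hzl hzm
  have hDl := denom_ne_zero τ hτ1 hτ2 y hy0 hy1 zl hzl
  have hDm := denom_ne_zero τ hτ1 hτ2 y hy0 hy1 zm hzm
  simp only [phiy, u1, u2]
  have hA : τ.1 * starRingEnd ℂ τ.1 = 1 := by
    rw [Complex.mul_conj, Complex.normSq_eq_norm_sq, hτ1]; norm_num
  have hB : τ.2 * starRingEnd ℂ τ.2 = 1 := by
    rw [Complex.mul_conj, Complex.normSq_eq_norm_sq, hτ2]; norm_num
  have hs : ((Real.sqrt y : ℝ) : ℂ) * ((Real.sqrt y : ℝ) : ℂ) = (y : ℂ) := by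
    rw [← Complex.ofReal_mul, Real.mul_self_sqrt hy0.le]
  have ht : ((Real.sqrt (1-y) : ℝ) : ℂ) * ((Real.sqrt (1-y) : ℝ) : ℂ) = 1 - (y : ℂ) := by
    rw [← Complex.ofReal_mul, Real.mul_self_sqrt (by linarith)]; push_cast; ring
  have hDmc : 1 - τ.1 * starRingEnd ℂ zm.1 * (1 - (y:ℂ)) - τ.2 * starRingEnd ℂ zm.2 * (y:ℂ) ≠ 0 := by
    intro h
    apply hDm
    have h2 := congrArg (starRingEnd ℂ) h
    simp only [map_sub, map_mul, map_one, Complex.conj_conj, Complex.conj_ofReal, map_zero] at h2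
    exact h2
  simp only [map_div₀, map_mul, map_sub, map_add, map_one, Complex.conj_conj, Complex.conj_ofReal]
  field_simp
  have hD : (1 - τ.1 * (starRingEnd ℂ) zm.1 * (1 - ↑y) - ↑y * τ.2 * (starRingEnd ℂ) zm.2) *
          (1 - (1 - ↑y) * (starRingEnd ℂ) τ.1 * zl.1 - ↑y * (starRingEnd ℂ) τ.2 * zl.2) ≠ 0 :=
    mul_ne_zero (by convert hDmc using 1; ring) (by convert hDl using 1; ring)
  rw [one_sub_div hD, div_left_inj' hD]
  linear_combination ((-1:ℂ) * (starRingEnd ℂ zm.1) * zl.1 * (y:ℂ) + (1:ℂ) * (starRingEnd ℂ zm.1) * (starRingEnd ℂ zm.2) * zl.1 * zl.2 + (-1:ℂ) * (starRingEnd ℂ zm.1) * (starRingEnd ℂ zm.2) * zl.1 * zl.2 * (y:ℂ) + (1:ℂ) * (starRingEnd ℂ τ.2) * (starRingEnd ℂ zm.1) * zl.1 * zl.2 * (y:ℂ) + (1:ℂ) * τ.2 * (starRingEnd ℂ zm.1) * (starRingEnd ℂ zm.2) * zl.1 * (y:ℂ) + (-1:ℂ) * τ.2 * (starRingEnd ℂ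 τ.2) * (starRingEnd ℂ zm.1) * (starRingEnd ℂ zm.2) * zl.1 * zl.2) * hA + ((-1:ℂ) * (starRingEnd ℂ zm.2) * zl.2 + (1:ℂ) * (starRingEnd ℂ zm.2) * zl.2 * (y:ℂ) + (-1:ℂ) * (starRingEnd ℂ zm.1) * (starRingEnd ℂ zm.2) * zl.1 * zl.2 + (1:ℂ) * (starRingEnd ℂ zm.1) * (starRingEnd ℂ zm.2) * zl.1 * zl.2 * (y:ℂ) + (1:ℂ) * (starRingEnd ℂ τ.1) * (starRingEnd ℂ zm.2) * zl.1 * zl.2 + (-1:ℂ) * (starRingEnd ℂ τ.1) * (starRingEnd ℂ zm.2) * zl.1 * zl.2 * (y:ℂ) + (1:ℂ) * τ.1 * (starRingEnd ℂ zm.1) * (starRingEnd ℂ zm.2) * zl.2 + (-1:ℂ) * τ.1 * (starRingEnd ℂ zm.1) * (starRingEnd ℂ zm.2) * zl.2 * (y:ℂ)) * hB + ((-1:ℂ) + (1:ℂ) * (starRingEnd ℂ zm.1) * zl.1 + (1:ℂ) * (starRingEnd ℂ τ.2) * zl.2 + (-1:ℂ) * (starRingEnd ℂ τ.2) * (starRingEnd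 ℂ zm.1) * zl.1 * zl.2 + (1:ℂ) * τ.2 * (starRingEnd ℂ zm.2) + (-1:ℂ) * τ.2 * (starRingEnd ℂ zm.1) * (starRingEnd ℂ zm.2) * zl.1 + (-1:ℂ) * τ.2 * (starRingEnd ℂ τ.2) * (starRingEnd ℂ zm.2) * zl.2 + (1:ℂ) * τ.2 * (starRingEnd ℂ τ.2) * (starRingEnd ℂ zm.1) * (starRingEnd ℂ zm.2) * zl.1 * zl.2) * hs + ((-1:ℂ) + (1:ℂ) * (starRingEnd ℂ zm.2) * zl.2 + (1:ℂ) * (starRingEnd ℂ τ.1) * zl.1 + (-1:ℂ) * (starRingEnd ℂ τ.1) * (starRingEnd ℂ zm.2) * zl.1 * zl.2 + (1:ℂ) * τ.1 * (starRingEnd ℂ zm.1) + (-1:ℂ) * τ.1 * (starRingEnd ℂ zm.1) * (starRingEnd ℂ zm.2) * zl.2 + (-1:ℂ) * τ.1 * (starRingEnd ℂ τ.1) * (starRingEnd ℂ zm.1) * zl.1 + (1:ℂ) * τ.1 * (starRingEnd ℂ τ.1) * (starRingEnd ℂ zm.1) * (starRingEnd ℂ zm.2) * zl.1 * zl.2)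 * ht
end

section
/- Let τ ∈ 𝕋², y ∈ [0,1], c > 0, and λ ∈ 𝔻² with ‖τ − λ‖_∞ ≤ c(1 − ‖λ‖_∞). Then |τ̄¹λ¹ − τ̄²λ²| ≤ 2c·|1 − (1−y)τ̄¹λ¹ − y τ̄²λ²|. -/
open Complex Filter Set

theorem stmt10 (τ : ℂ × ℂ) (hτ1 : ‖τ.1‖ = 1) (hτ2 : ‖τ.2‖ = 1)
    (y : ℝ) (hy0 : 0 ≤ y) (hy1 : y ≤ 1)
    (c : ℝ) (hc : 0 < c)
    (z : ℂ × ℂ) (hz : ‖z‖ < 1) (hnt : ‖τ - z‖ ≤ c * (1 - ‖z‖)) :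
    ‖starRingEnd ℂ τ.1 * z.1 - starRingEnd ℂ τ.2 * z.2‖ ≤
      2 * c * ‖1 - (1 - (y : ℂ)) * (starRingEnd ℂ τ.1 * z.1)
        - (y : ℂ) * (starRingEnd ℂ τ.2 * z.2)‖ := by
  set a : ℂ := starRingEnd ℂ τ.1 * z.1 with ha
  set b : ℂ := starRingEnd ℂ τ.2 * z.2 with hb
  have hz1 : ‖z.1‖ ≤ ‖z‖ := norm_fst_le z
  have hz2 : ‖z.2‖ ≤ ‖z‖ := norm_snd_le z
  have hd1 : ‖τ.1 - z.1‖ ≤ ‖τ - z‖ := norm_fst_le (τ - z)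
  have hd2 : ‖τ.2 - z.2‖ ≤ ‖τ - z‖ := norm_snd_le (τ - z)
  have hc1 : starRingEnd ℂ τ.1 * τ.1 = 1 := by
    rw [mul_comm, Complex.mul_conj]
    norm_cast
    rw [Complex.normSq_eq_norm_sq, hτ1]; norm_num
  have hc2 : starRingEnd ℂ τ.2 * τ.2 = 1 := by
    rw [mul_comm, Complex.mul_conj]
    norm_cast
    rw [Complex.normSq_eq_norm_sq, hτ2]; norm_num
  have hna1 : ‖a‖ ≤ ‖z‖ := by
    rw [ha, norm_mul, RCLike.norm_conj, hτ1, one_mul]; exact hz1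
  have hnb1 : ‖b‖ ≤ ‖z‖ := by
    rw [hb, norm_mul, RCLike.norm_conj, hτ2, one_mul]; exact hz2
  have hea : ‖a - 1‖ ≤ c * (1 - ‖z‖) := by
    have : a - 1 = starRingEnd ℂ τ.1 * (z.1 - τ.1) := by
      rw [ha, mul_sub, hc1]
    rw [this, norm_mul, RCLike.norm_conj, hτ1, one_mul, norm_sub_rev]
    exact le_trans hd1 hnt
  have heb : ‖b - 1‖ ≤ c * (1 - ‖z‖) := by
    have : b - 1 = starRingEnd ℂ τ.2 * (z.2 - τ.2) := by
      rw [hb, mul_sub, hc2]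
    rw [this, norm_mul, RCLike.norm_conj, hτ2, one_mul, norm_sub_rev]
    exact le_trans hd2 hnt
  have hlhs : ‖a - b‖ ≤ 2 * (c * (1 - ‖z‖)) := by
    have : a - b = (a - 1) - (b - 1) := by ring
    rw [this]
    calc ‖(a - 1) - (b - 1)‖ ≤ ‖a - 1‖ + ‖b - 1‖ := norm_sub_le _ _
      _ ≤ 2 * (c * (1 - ‖z‖)) := by linarith
  have hre : (1 : ℝ) - ‖z‖ ≤ ‖1 - (1 - (y : ℂ)) * a - (y : ℂ) * b‖ := by
    have hrea : a.re ≤ ‖z‖ := le_trans (Complex.re_le_norm a) hna1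
    have hreb : b.re ≤ ‖z‖ := le_trans (Complex.re_le_norm b) hnb1
    have h1 : ((1 : ℂ) - (1 - (y : ℂ)) * a - (y : ℂ) * b).re
        = 1 - (1 - y) * a.re - y * b.re := by
      simp [Complex.sub_re, Complex.mul_re, Complex.ofReal_re, Complex.ofReal_im]
    calc (1 : ℝ) - ‖z‖ = 1 - (1 - y) * ‖z‖ - y * ‖z‖ := by ring
      _ ≤ 1 - (1 - y) * a.re - y * b.re := by nlinarith
      _ = ((1 : ℂ) - (1 - (y : ℂ)) * a - (y : ℂ) * b).re := h1.symm
      _ ≤ ‖(1 : ℂ) - (1 - (y : ℂ)) * a - (y : ℂ) * b‖ :=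
        Complex.re_le_norm _
  calc ‖a - b‖ ≤ 2 * (c * (1 - ‖z‖)) := hlhs
    _ ≤ 2 * c * ‖1 - (1 - (y : ℂ)) * a - (y : ℂ) * b‖ := by nlinarith
end

section
/- Let τ ∈ 𝕋², y ∈ (0,1), c > 0, and λ ∈ 𝔻² with ‖τ − λ‖_∞ ≤ c(1 − ‖λ‖_∞). Then the model vector u_{y,λ} = (√y(1 − τ̄²λ²), √(1−y)(1 − τ̄¹λ¹))/(1 − τ̄¹λ¹(1−y) − τ̄²λ²y) ∈ ℂ² satisfies ‖u_{y,λ}‖ ≤ 2c√(y(1−y)) + 1 ≤ c + 1. In particular u_{y,λ} is bounded on every set approaching τ nontangentially, so τ is a B-point for the model (ℂ², u_y) of φ_y. -/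
open Complex Filter Set

lemma key_bound (τ : ℂ × ℂ) (hτ1 : ‖τ.1‖ = 1) (hτ2 : ‖τ.2‖ = 1)
    (y : ℝ) (hy0 : 0 < y) (hy1 : y < 1) (c : ℝ) (hc : 0 < c)
    (z : ℂ × ℂ) (hz : ‖z‖ < 1) (hzc : ‖τ - z‖ ≤ c * (1 - ‖z‖)) :
    Real.sqrt (‖u1 τ y z‖ ^ 2 + ‖u2 τ y z‖ ^ 2) ≤ 2 * c * Real.sqrt (y * (1 - y)) + 1 := by
  set t : ℝ := 1 - ‖z‖ with ht
  have htpos : 0 < t := by rw [ht]; linarith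
  set A : ℂ := 1 - starRingEnd ℂ τ.1 * z.1 with hA
  set B : ℂ := 1 - starRingEnd ℂ τ.2 * z.2 with hB
  set D : ℂ := 1 - starRingEnd ℂ τ.1 * z.1 * (1 - (y : ℂ)) - starRingEnd ℂ τ.2 * z.2 * (y : ℂ)
    with hDdef
  have hD : D = ((1 - y : ℝ) : ℂ) * A + ((y : ℝ) : ℂ) * B := by
    rw [hDdef, hA, hB]; push_cast; ring
  -- real part bounds
  have hz1 : ‖z.1‖ ≤ ‖z‖ := norm_fst_le z
  have hz2 : ‖z.2‖ ≤ ‖z‖ := norm_snd_le z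
  have hReA : t ≤ A.re := by
    have h1 : (starRingEnd ℂ τ.1 * z.1).re ≤ ‖starRingEnd ℂ τ.1 * z.1‖ :=
      Complex.re_le_norm _
    have h2 : ‖starRingEnd ℂ τ.1 * z.1‖ = ‖z.1‖ := by
      rw [norm_mul, RCLike.norm_conj, hτ1, one_mul]
    have h3 : A.re = 1 - (starRingEnd ℂ τ.1 * z.1).re := by simp [hA]
    rw [h3, ht]; rw [h2] at h1; linarith
  have hReB : t ≤ B.re := by
    have h1 : (starRingEnd ℂ τ.2 * z.2).re ≤ ‖starRingEnd ℂ τ.2 * z.2‖ :=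
      Complex.re_le_norm _
    have h2 : ‖starRingEnd ℂ τ.2 * z.2‖ = ‖z.2‖ := by
      rw [norm_mul, RCLike.norm_conj, hτ2, one_mul]
    have h3 : B.re = 1 - (starRingEnd ℂ τ.2 * z.2).re := by simp [hB]
    rw [h3, ht]; rw [h2] at h1; linarith
  have hDre : t ≤ D.re := by
    have h : D.re = (1 - y) * A.re + y * B.re := by
      rw [hD]; simp [Complex.add_re, Complex.re_ofReal_mul]
    rw [h]; nlinarith
  have hDnorm : t ≤ ‖D‖ :=
    le_trans hDre ((Complex.re_le_norm D).trans le_rfl)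
  have hDpos : 0 < ‖D‖ := lt_of_lt_of_le htpos hDnorm
  have hDne : D ≠ 0 := by
    intro h; rw [h] at hDpos; simp at hDpos
  -- norm bounds on A and B
  have hAle : ‖A‖ ≤ c * t := by
    have h1 : starRingEnd ℂ τ.1 * τ.1 = 1 := by
      rw [mul_comm, Complex.mul_conj, Complex.normSq_eq_norm_sq, hτ1]
      norm_num
    have hAeq : A = starRingEnd ℂ τ.1 * (τ.1 - z.1) := by rw [hA, mul_sub, h1]
    rw [hAeq, norm_mul, RCLike.norm_conj, hτ1, one_mul]
    calc ‖τ.1 - z.1‖ = ‖(τ - z).1‖ := rfl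
      _ ≤ ‖τ - z‖ := norm_fst_le _
      _ ≤ c * t := hzc
  have hBle : ‖B‖ ≤ c * t := by
    have h1 : starRingEnd ℂ τ.2 * τ.2 = 1 := by
      rw [mul_comm, Complex.mul_conj, Complex.normSq_eq_norm_sq, hτ2]
      norm_num
    have hBeq : B = starRingEnd ℂ τ.2 * (τ.2 - z.2) := by rw [hB, mul_sub, h1]
    rw [hBeq, norm_mul, RCLike.norm_conj, hτ2, one_mul]
    calc ‖τ.2 - z.2‖ = ‖(τ - z).2‖ := rfl
      _ ≤ ‖τ - z‖ := norm_snd_le _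
      _ ≤ c * t := hzc
  -- the key algebraic identity
  have hsq : ∀ w : ℂ, ‖w‖ ^ 2 = Complex.normSq w := fun w => by
    rw [Complex.sq_norm]
  have hid : (1 - y) * ‖A‖ ^ 2 + y * ‖B‖ ^ 2 = ‖D‖ ^ 2 + (1 - y) * y * ‖A - B‖ ^ 2 := by
    rw [hsq, hsq, hsq, hsq]
    have h : (((1 - y) * Complex.normSq A + y * Complex.normSq B : ℝ) : ℂ) =
        ((Complex.normSq D + (1 - y) * y * Complex.normSq (A - B) : ℝ) : ℂ) := by
      push_cast
      rw [← Complex.mul_conj A, ← Complex.mul_conj B, ← Complex.mul_conj D,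
        ← Complex.mul_conj (A - B), hD]
      simp only [map_add, map_mul, map_sub, Complex.conj_ofReal]
      push_cast
      ring
    exact_mod_cast h
  -- norms of u1 and u2
  have hu1 : ‖u1 τ y z‖ ^ 2 = y * ‖B‖ ^ 2 / ‖D‖ ^ 2 := by
    have h : u1 τ y z = (Real.sqrt y : ℂ) * B / D := rfl
    rw [h, norm_div, norm_mul, Complex.norm_real, Real.norm_eq_abs,
      _root_.abs_of_nonneg (Real.sqrt_nonneg y), div_pow, mul_pow, Real.sq_sqrt hy0.le]
  have hu2 : ‖u2 τ y z‖ ^ 2 = (1 - y) * ‖A‖ ^ 2 / ‖D‖ ^ 2 := by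
    have h : u2 τ y z = (Real.sqrt (1 - y) : ℂ) * A / D := rfl
    rw [h, norm_div, norm_mul, Complex.norm_real, Real.norm_eq_abs,
      _root_.abs_of_nonneg (Real.sqrt_nonneg _), div_pow, mul_pow,
      Real.sq_sqrt (by linarith : (0:ℝ) ≤ 1 - y)]
  have heab : ‖A - B‖ ≤ ‖A‖ + ‖B‖ := norm_sub_le A B
  -- generalize to real variables
  set a : ℝ := ‖A‖ with ha
  set b : ℝ := ‖B‖ with hb
  set d : ℝ := ‖D‖ with hd
  set e : ℝ := ‖A - B‖ with he
  have henn : 0 ≤ e := norm_nonneg _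
  clear_value a b d e
  clear hA hB hDdef hD hReA hReB hDre hDne hsq ha hb hd he hz1 hz2 hzc
  have hsum : ‖u1 τ y z‖ ^ 2 + ‖u2 τ y z‖ ^ 2 = (d ^ 2 + (1 - y) * y * e ^ 2) / d ^ 2 := by
    rw [hu1, hu2, ← add_div]
    congr 1
    linarith
  set s : ℝ := Real.sqrt (y * (1 - y)) * (e / d) with hs
  have hsnn : 0 ≤ s := by positivity
  have hseq : s ^ 2 * d ^ 2 = (1 - y) * y * e ^ 2 := by
    rw [hs, mul_pow, Real.sq_sqrt (by nlinarith : (0:ℝ) ≤ y * (1 - y)), div_pow,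
      mul_assoc, div_mul_cancel₀ _ (pow_ne_zero 2 (ne_of_gt hDpos))]
    ring
  have hmain : (d ^ 2 + (1 - y) * y * e ^ 2) / d ^ 2 ≤ (1 + s) ^ 2 := by
    rw [div_le_iff₀ (by positivity)]
    nlinarith [mul_nonneg hsnn (sq_nonneg d)]
  have hsbound : s ≤ 2 * c * Real.sqrt (y * (1 - y)) := by
    have hed : e / d ≤ 2 * c := by
      rw [div_le_iff₀ hDpos]
      nlinarith
    calc s ≤ Real.sqrt (y * (1 - y)) * (2 * c) :=
          mul_le_mul_of_nonneg_left hed (Real.sqrt_nonneg _)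
      _ = 2 * c * Real.sqrt (y * (1 - y)) := by ring
  calc Real.sqrt (‖u1 τ y z‖ ^ 2 + ‖u2 τ y z‖ ^ 2) ≤ Real.sqrt ((1 + s) ^ 2) := by
        rw [hsum]; exact Real.sqrt_le_sqrt hmain
    _ = 1 + s := Real.sqrt_sq (by linarith)
    _ ≤ 2 * c * Real.sqrt (y * (1 - y)) + 1 := by linarith

theorem stmt11 (τ : ℂ × ℂ) (hτ1 : ‖τ.1‖ = 1) (hτ2 : ‖τ.2‖ = 1)
    (y : ℝ) (hy0 : 0 < y) (hy1 : y < 1) (c : ℝ) (hc : 0 < c) :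
    (∀ z : ℂ × ℂ, ‖z‖ < 1 → ‖τ - z‖ ≤ c * (1 - ‖z‖) →
      Real.sqrt (‖u1 τ y z‖ ^ 2 + ‖u2 τ y z‖ ^ 2) ≤ 2 * c * Real.sqrt (y * (1 - y)) + 1 ∧
      2 * c * Real.sqrt (y * (1 - y)) + 1 ≤ c + 1) ∧
    -- hence `τ` is a `B`-point for the model `(ℂ², u_y)` of `φ_y`
    ∀ S : Set (ℂ × ℂ), S ⊆ {z : ℂ × ℂ | ‖z‖ < 1} →
      (∀ z ∈ S, ‖τ - z‖ ≤ c * (1 - ‖z‖)) →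
      ∃ C : ℝ, ∀ z ∈ S, Real.sqrt (‖u1 τ y z‖ ^ 2 + ‖u2 τ y z‖ ^ 2) ≤ C := by
  have hhalf : Real.sqrt (y * (1 - y)) ≤ 1 / 2 := by
    nlinarith [Real.sq_sqrt (by nlinarith : (0:ℝ) ≤ y * (1 - y)),
      Real.sqrt_nonneg (y * (1 - y)), sq_nonneg (2 * y - 1)]
  constructor
  · intro z hz hzc
    exact ⟨key_bound τ hτ1 hτ2 y hy0 hy1 c hc z hz hzc, by nlinarith⟩
  · intro S hS hSc
    exact ⟨2 * c * Real.sqrt (y * (1 - y)) + 1, fun z hz =>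
      key_bound τ hτ1 hτ2 y hy0 hy1 c hc z (hS hz) (hSc z hz)⟩
end

section
/- Let M be a complex Hilbert space, P an orthogonal projection on M, and τ ∈ 𝕋². Then for all λ, μ ∈ 𝔻², 1 − I_P(μ)* I_P(λ) = (1 − conj(μ¹)λ¹)P + (1 − conj(μ²)λ²)(1−P). Consequently, if φ is holomorphic on 𝔻² with |φ| ≤ 1 and v : 𝔻² → M satisfies the generalized model equation 1 − conj(φ(μ))φ(λ) = ⟨(1 − I_P(μ)* I_P(λ)) v_λ, v_μ⟩ for all λ, μ ∈ 𝔻², then 1 − conj(φ(μ))φ(λ) = (1 − conj(μ¹)λ¹)⟨P v_λ, P v_μ⟩ + (1 − conj(μ²)λ²)⟨(1−P) v_λ, (1−P) v_μ⟩; that is, the generalized model is a standard model. -/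
open Complex Filter Set

lemma IY_proj {M : Type*} [NormedAddCommGroup M] [InnerProductSpace ℂ M] [CompleteSpace M]
    (P : M →L[ℂ] M) (hPidem : IsIdempotentElem P)
    (τ : ℂ × ℂ) (hτ1 : ‖τ.1‖ = 1) (hτ2 : ‖τ.2‖ = 1)
    (z : ℂ × ℂ) (hz : ‖z‖ < 1) :
    IY P τ z = (starRingEnd ℂ τ.1 * z.1) • P
      + (starRingEnd ℂ τ.2 * z.2) • ((1 : M →L[ℂ] M) - P) := by
  set a : ℂ := starRingEnd ℂ τ.1 * z.1 with ha_def
  set b : ℂ := starRingEnd ℂ τ.2 * z.2 with hb_def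
  have hPP : P * P = P := hPidem
  have hPQ : P * (1 - P) = 0 := by simp [mul_sub, hPP]
  have hQP : (1 - P) * P = 0 := by simp [sub_mul, hPP]
  have hQQ : (1 - P) * (1 - P) = 1 - P := by simp [mul_sub, sub_mul, hPP]
  have ha : ‖a‖ < 1 := by
    rw [ha_def, norm_mul, RCLike.norm_conj, hτ1, one_mul]
    exact lt_of_le_of_lt (norm_fst_le z) hz
  have hb : ‖b‖ < 1 := by
    rw [hb_def, norm_mul, RCLike.norm_conj, hτ2, one_mul]
    exact lt_of_le_of_lt (norm_snd_le z) hz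
  have h1a : (1 : ℂ) - a ≠ 0 := by
    intro h
    have : a = 1 := by linear_combination -h
    rw [this] at ha; simp at ha
  have h1b : (1 : ℂ) - b ≠ 0 := by
    intro h
    have : b = 1 := by linear_combination -h
    rw [this] at hb; simp at hb
  set D : M →L[ℂ] M := (1 : M →L[ℂ] M) - a • ((1 : M →L[ℂ] M) - P) - b • P with hD_def
  set E : M →L[ℂ] M := (1 - a)⁻¹ • ((1 : M →L[ℂ] M) - P) + (1 - b)⁻¹ • P with hE_def
  have hDE : D * E = 1 := by
    rw [hD_def, hE_def]
    simp only [mul_add, add_mul, sub_mul, mul_sub, smul_mul_assoc, mul_smul_comm, smul_smul,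
      one_mul, mul_one, hPP, hPQ, hQP, hQQ, smul_zero]
    match_scalars <;> (field_simp; try ring)
  have hED : E * D = 1 := by
    rw [hD_def, hE_def]
    simp only [mul_add, add_mul, sub_mul, mul_sub, smul_mul_assoc, mul_smul_comm, smul_smul,
      one_mul, mul_one, hPP, hPQ, hQP, hQQ, smul_zero]
    match_scalars <;> (field_simp; try ring)
  have hUnit : IsUnit D := ⟨⟨D, E, hDE, hED⟩, rfl⟩
  have hkey : (a • P + b • ((1 : M →L[ℂ] M) - P)) * D
      = a • P + b • ((1 : M →L[ℂ] M) - P) - (a * b) • (1 : M →L[ℂ] M) := by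
    rw [hD_def]
    simp only [mul_add, add_mul, sub_mul, mul_sub, smul_mul_assoc, mul_smul_comm, smul_smul,
      one_mul, mul_one, hPP, hPQ, hQP, hQQ, smul_zero]
    match_scalars <;> ring
  have hab : starRingEnd ℂ τ.1 * starRingEnd ℂ τ.2 * z.1 * z.2 = a * b := by
    rw [ha_def, hb_def]; ring
  calc IY P τ z = (a • P + b • ((1 : M →L[ℂ] M) - P) - (a * b) • (1 : M →L[ℂ] M))
        * Ring.inverse D := by rw [IY, hab]
    _ = ((a • P + b • ((1 : M →L[ℂ] M) - P)) * D) * Ring.inverse D := by rw [hkey]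
    _ = (a • P + b • ((1 : M →L[ℂ] M) - P)) * (D * Ring.inverse D) := by rw [mul_assoc]
    _ = _ := by rw [Ring.mul_inverse_cancel D hUnit, mul_one]

theorem stmt13 {M : Type*} [NormedAddCommGroup M] [InnerProductSpace ℂ M] [CompleteSpace M]
    (P : M →L[ℂ] M) (hPsa : IsSelfAdjoint P) (hPidem : IsIdempotentElem P)
    (τ : ℂ × ℂ) (hτ1 : ‖τ.1‖ = 1) (hτ2 : ‖τ.2‖ = 1) :
    (∀ zl zm : ℂ × ℂ, ‖zl‖ < 1 → ‖zm‖ < 1 →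
      (1 : M →L[ℂ] M) - ContinuousLinearMap.adjoint (IY P τ zm) * IY P τ zl =
        (1 - starRingEnd ℂ zm.1 * zl.1) • P
          + (1 - starRingEnd ℂ zm.2 * zl.2) • ((1 : M →L[ℂ] M) - P)) ∧
    ∀ (φ : ℂ × ℂ → ℂ), DifferentiableOn ℂ φ {z : ℂ × ℂ | ‖z‖ < 1} →
      (∀ z : ℂ × ℂ, ‖z‖ < 1 → ‖φ z‖ ≤ 1) →
      ∀ v : ℂ × ℂ → M,
      (∀ zl zm : ℂ × ℂ, ‖zl‖ < 1 → ‖zm‖ < 1 →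
        (1 : ℂ) - starRingEnd ℂ (φ zm) * φ zl =
          (inner ℂ (v zm)
            ((((1 : M →L[ℂ] M) - ContinuousLinearMap.adjoint (IY P τ zm) * IY P τ zl)) (v zl)) : ℂ)) →
      ∀ zl zm : ℂ × ℂ, ‖zl‖ < 1 → ‖zm‖ < 1 →
        (1 : ℂ) - starRingEnd ℂ (φ zm) * φ zl =
          (1 - starRingEnd ℂ zm.1 * zl.1) * (inner ℂ (P (v zm)) (P (v zl)) : ℂ)
          + (1 - starRingEnd ℂ zm.2 * zl.2) *
              (inner ℂ (((1 : M →L[ℂ] M) - P) (v zm)) (((1 : M →L[ℂ] M) - P) (v zl)) : ℂ) := by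
  have hPP : P * P = P := hPidem
  have hPQ : P * (1 - P) = 0 := by simp [mul_sub, hPP]
  have hQP : (1 - P) * P = 0 := by simp [sub_mul, hPP]
  have hQQ : (1 - P) * (1 - P) = 1 - P := by simp [mul_sub, sub_mul, hPP]
  have hτp1 : τ.1 * starRingEnd ℂ τ.1 = 1 := by
    rw [Complex.mul_conj, Complex.normSq_eq_norm_sq, hτ1]; norm_num
  have hτp2 : τ.2 * starRingEnd ℂ τ.2 = 1 := by
    rw [Complex.mul_conj, Complex.normSq_eq_norm_sq, hτ2]; norm_num
  have part1 : ∀ zl zm : ℂ × ℂ, ‖zl‖ < 1 → ‖zm‖ < 1 →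
      (1 : M →L[ℂ] M) - ContinuousLinearMap.adjoint (IY P τ zm) * IY P τ zl =
        (1 - starRingEnd ℂ zm.1 * zl.1) • P
          + (1 - starRingEnd ℂ zm.2 * zl.2) • ((1 : M →L[ℂ] M) - P) := by
    intro zl zm hzl hzm
    rw [IY_proj P hPidem τ hτ1 hτ2 _ hzl, IY_proj P hPidem τ hτ1 hτ2 _ hzm,
      ← ContinuousLinearMap.star_eq_adjoint]
    have hc1 : star (starRingEnd ℂ τ.1 * zm.1) * (starRingEnd ℂ τ.1 * zl.1)
        = starRingEnd ℂ zm.1 * zl.1 := by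
      simp only [star_mul', RCLike.star_def, Complex.conj_conj]
      linear_combination starRingEnd ℂ zm.1 * zl.1 * hτp1
    have hc2 : star (starRingEnd ℂ τ.2 * zm.2) * (starRingEnd ℂ τ.2 * zl.2)
        = starRingEnd ℂ zm.2 * zl.2 := by
      simp only [star_mul', RCLike.star_def, Complex.conj_conj]
      linear_combination starRingEnd ℂ zm.2 * zl.2 * hτp2
    have hc1' : starRingEnd ℂ τ.1 * zl.1 * star (starRingEnd ℂ τ.1 * zm.1)
        = zl.1 * starRingEnd ℂ zm.1 := by
      simp only [star_mul', RCLike.star_def, Complex.conj_conj]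
      linear_combination zl.1 * starRingEnd ℂ zm.1 * hτp1
    have hc2' : starRingEnd ℂ τ.2 * zl.2 * star (starRingEnd ℂ τ.2 * zm.2)
        = zl.2 * starRingEnd ℂ zm.2 := by
      simp only [star_mul', RCLike.star_def, Complex.conj_conj]
      linear_combination zl.2 * starRingEnd ℂ zm.2 * hτp2
    rw [star_add, star_smul, star_smul, hPsa.star_eq, (IsSelfAdjoint.one _).sub hPsa |>.star_eq]
    simp only [mul_add, add_mul, smul_mul_assoc, mul_smul_comm, smul_smul,
      hPP, hPQ, hQP, hQQ, smul_zero, add_zero, zero_add, hc1, hc2, hc1', hc2']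
    module
  refine ⟨part1, ?_⟩
  intro φ hφ hφb v hv zl zm hzl hzm
  have key : ∀ (T : M →L[ℂ] M), IsSelfAdjoint T → IsIdempotentElem T →
      ∀ x y : M, (inner ℂ x (T y) : ℂ) = inner ℂ (T x) (T y) := by
    intro T hTsa hTidem x y
    have hadj : ContinuousLinearMap.adjoint T = T := by
      rw [← ContinuousLinearMap.star_eq_adjoint, hTsa.star_eq]
    calc (inner ℂ x (T y) : ℂ) = inner ℂ x (T (T y)) := by
          rw [← ContinuousLinearMap.mul_apply, hTidem]
      _ = inner ℂ (ContinuousLinearMap.adjoint T x) (T y) :=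
          (ContinuousLinearMap.adjoint_inner_left T (T y) x).symm
      _ = inner ℂ (T x) (T y) := by rw [hadj]
  rw [hv zl zm hzl hzm, part1 zl zm hzl hzm]
  simp only [ContinuousLinearMap.add_apply, ContinuousLinearMap.smul_apply, inner_add_right,
    inner_smul_right]
  rw [key P hPsa hPidem, key (1 - P) ((IsSelfAdjoint.one _).sub hPsa)
    (by exact hQQ : IsIdempotentElem (1 - P))]
end

section
/- Let φ be holomorphic on 𝔻² with |φ| ≤ 1 and τ ∈ 𝕋². Suppose φ has a generalized model (M, v, I_P) at τ in which the positive contraction is an orthogonal projection P, and the model has a C-point at τ. Then τ is a carapoint for φ and φ is nontangentially differentiable at τ: there exist φ(τ) ∈ ℂ and a ℂ-linear map L : ℂ² → ℂ such that for every δ ∈ ℂ² with Re(τ̄¹δ¹) < 0 and Re(τ̄²δ²) < 0, lim_{t→0⁺} (φ(τ+tδ) − φ(τ))/t exists and equals L(δ). -/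
open Complex Filter Set

section Aux

set_option linter.unusedSectionVars false

variable {M : Type*} [NormedAddCommGroup M] [InnerProductSpace ℂ M] [CompleteSpace M]

lemma diag_key (P : M →L[ℂ] M) (hP : P * P = P) (a b : ℂ) (ha : a ≠ 1) (hb : b ≠ 1) :
    ((1 : M →L[ℂ] M) - a • ((1 : M →L[ℂ] M) - P) - b • P) *
      ((1-a)⁻¹ • ((1 : M →L[ℂ] M) - P) + (1-b)⁻¹ • P) = 1 := by
  have h1 : (1 - a) ≠ 0 := sub_ne_zero.mpr (fun h => ha h.symm)
  have h2 : (1 - b) ≠ 0 := sub_ne_zero.mpr (fun h => hb h.symm)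
  have hQ : ((1 : M →L[ℂ] M) - P) * ((1 : M →L[ℂ] M) - P) = (1 : M →L[ℂ] M) - P := by
    simp [mul_sub, sub_mul, hP]
  have hPQ : P * ((1 : M →L[ℂ] M) - P) = 0 := by simp [mul_sub, hP]
  have hQP : ((1 : M →L[ℂ] M) - P) * P = 0 := by simp [sub_mul, hP]
  have expand : ((1 : M →L[ℂ] M) - a • ((1 : M →L[ℂ] M) - P) - b • P) *
      ((1-a)⁻¹ • ((1 : M →L[ℂ] M) - P) + (1-b)⁻¹ • P)
      = ((1-a)⁻¹ * (1 - a)) • ((1 : M →L[ℂ] M) - P) + ((1-b)⁻¹ * (1 - b)) • P := by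
    simp only [sub_mul, mul_add, smul_mul_assoc, mul_smul_comm, one_mul, hQ, hPQ, hQP, hP,
      smul_zero, smul_smul, sub_smul, one_smul]
    module
  rw [expand, inv_mul_cancel₀ h1, inv_mul_cancel₀ h2, one_smul, one_smul]
  abel_nf

lemma diag_key' (P : M →L[ℂ] M) (hP : P * P = P) (a b : ℂ) (ha : a ≠ 1) (hb : b ≠ 1) :
    ((1-a)⁻¹ • ((1 : M →L[ℂ] M) - P) + (1-b)⁻¹ • P) *
      ((1 : M →L[ℂ] M) - a • ((1 : M →L[ℂ] M) - P) - b • P) = 1 := by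
  have h1 : (1 - a) ≠ 0 := sub_ne_zero.mpr (fun h => ha h.symm)
  have h2 : (1 - b) ≠ 0 := sub_ne_zero.mpr (fun h => hb h.symm)
  have hQ : ((1 : M →L[ℂ] M) - P) * ((1 : M →L[ℂ] M) - P) = (1 : M →L[ℂ] M) - P := by
    simp [mul_sub, sub_mul, hP]
  have hPQ : P * ((1 : M →L[ℂ] M) - P) = 0 := by simp [mul_sub, hP]
  have hQP : ((1 : M →L[ℂ] M) - P) * P = 0 := by simp [sub_mul, hP]
  have expand : ((1-a)⁻¹ • ((1 : M →L[ℂ] M) - P) + (1-b)⁻¹ • P) *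
      ((1 : M →L[ℂ] M) - a • ((1 : M →L[ℂ] M) - P) - b • P)
      = ((1-a)⁻¹ * (1 - a)) • ((1 : M →L[ℂ] M) - P) + ((1-b)⁻¹ * (1 - b)) • P := by
    simp only [mul_sub, add_mul, smul_mul_assoc, mul_smul_comm, mul_one, hQ, hPQ, hQP, hP,
      smul_zero, smul_smul, sub_smul, one_smul]
    module
  rw [expand, inv_mul_cancel₀ h1, inv_mul_cancel₀ h2, one_smul, one_smul]
  abel_nf

lemma IY_eq (P : M →L[ℂ] M) (hP : P * P = P) (τ z : ℂ × ℂ)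
    (hτ1 : ‖τ.1‖ = 1) (hτ2 : ‖τ.2‖ = 1) (hz : ‖z‖ < 1) :
    IY P τ z = (starRingEnd ℂ τ.1 * z.1) • P
      + (starRingEnd ℂ τ.2 * z.2) • ((1 : M →L[ℂ] M) - P) := by
  set a := starRingEnd ℂ τ.1 * z.1 with ha'
  set b := starRingEnd ℂ τ.2 * z.2 with hb'
  have hal : ‖a‖ < 1 := by
    calc ‖a‖ = ‖τ.1‖ * ‖z.1‖ := norm_mul _ _ |>.trans (by rw [RCLike.norm_conj])
    _ ≤ 1 * ‖z‖ := by rw [hτ1]; exact mul_le_mul_of_nonneg_left (norm_fst_le z) zero_le_one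
    _ < 1 := by simpa using hz
  have hbl : ‖b‖ < 1 := by
    calc ‖b‖ = ‖τ.2‖ * ‖z.2‖ := norm_mul _ _ |>.trans (by rw [RCLike.norm_conj])
    _ ≤ 1 * ‖z‖ := by rw [hτ2]; exact mul_le_mul_of_nonneg_left (norm_snd_le z) zero_le_one
    _ < 1 := by simpa using hz
  have ha : a ≠ 1 := fun h => by simp [h] at hal
  have hb : b ≠ 1 := fun h => by simp [h] at hbl
  have h1 : (1 - a) ≠ 0 := sub_ne_zero.mpr (fun h => ha h.symm)
  have h2 : (1 - b) ≠ 0 := sub_ne_zero.mpr (fun h => hb h.symm)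
  set D := (1 : M →L[ℂ] M) - a • ((1 : M →L[ℂ] M) - P) - b • P with hD
  set E := (1-a)⁻¹ • ((1 : M →L[ℂ] M) - P) + (1-b)⁻¹ • P with hE
  have hu : IsUnit D := ⟨⟨D, E, diag_key P hP a b ha hb, diag_key' P hP a b ha hb⟩, rfl⟩
  have hinv : Ring.inverse D = E := by
    rw [← hu.choose_spec]
    rw [Ring.inverse_unit]
    have h12 := hu.choose_spec
    exact Units.inv_eq_of_mul_eq_one_right (by rw [h12]; exact diag_key P hP a b ha hb)
  have hnum : (a • P + b • ((1 : M →L[ℂ] M) - P)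
        - (starRingEnd ℂ τ.1 * starRingEnd ℂ τ.2 * z.1 * z.2) • (1 : M →L[ℂ] M)) * E
      = a • P + b • ((1 : M →L[ℂ] M) - P) := by
    have hab : starRingEnd ℂ τ.1 * starRingEnd ℂ τ.2 * z.1 * z.2 = a * b := by ring
    have hQ : ((1 : M →L[ℂ] M) - P) * ((1 : M →L[ℂ] M) - P) = (1 : M →L[ℂ] M) - P := by
      simp [mul_sub, sub_mul, hP]
    have hPQ : P * ((1 : M →L[ℂ] M) - P) = 0 := by simp [mul_sub, hP]
    have hQP : ((1 : M →L[ℂ] M) - P) * P = 0 := by simp [sub_mul, hP]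
    have hone : (1 : M →L[ℂ] M) = P + ((1 : M →L[ℂ] M) - P) := by abel
    rw [hab, hE]
    rw [show a • P + b • ((1 : M →L[ℂ] M) - P) - (a*b) • (1 : M →L[ℂ] M)
        = (a * (1-b)) • P + (b * (1-a)) • ((1 : M →L[ℂ] M) - P) by
      rw [hone]; module]
    simp only [add_mul, mul_add, smul_mul_assoc, mul_smul_comm, hQ, hPQ, hQP, hP,
      smul_zero, smul_smul, add_zero, zero_add]
    rw [show (1-b)⁻¹ * (a * (1-b)) = a by field_simp,
        show (1-a)⁻¹ * (b * (1-a)) = b by field_simp]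
    abel
  rw [IY, ← ha', ← hb', ← hD, hinv]
  exact hnum

lemma adj_diag (P : M →L[ℂ] M) (hPsa : IsSelfAdjoint P) (a b : ℂ) :
    ContinuousLinearMap.adjoint (a • P + b • ((1 : M →L[ℂ] M) - P))
      = (starRingEnd ℂ a) • P + (starRingEnd ℂ b) • ((1 : M →L[ℂ] M) - P) := by
  rw [← ContinuousLinearMap.star_eq_adjoint]
  simp only [star_add, star_smul, star_sub, star_one, hPsa.star_eq]
  rfl

lemma diag_mul (P : M →L[ℂ] M) (hP : P * P = P) (a b c d : ℂ) :
    (a • P + b • ((1 : M →L[ℂ] M) - P)) * (c • P + d • ((1 : M →L[ℂ] M) - P))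
      = (a*c) • P + (b*d) • ((1 : M →L[ℂ] M) - P) := by
  have hQ : ((1 : M →L[ℂ] M) - P) * ((1 : M →L[ℂ] M) - P) = (1 : M →L[ℂ] M) - P := by
    simp [mul_sub, sub_mul, hP]
  have hPQ : P * ((1 : M →L[ℂ] M) - P) = 0 := by simp [mul_sub, hP]
  have hQP : ((1 : M →L[ℂ] M) - P) * P = 0 := by simp [sub_mul, hP]
  simp only [add_mul, mul_add, smul_mul_assoc, mul_smul_comm, hQ, hPQ, hQP, hP,
    smul_zero, smul_smul, add_zero, zero_add]
  ring_nf

lemma inner_split (P : M →L[ℂ] M) (c d : ℂ) (x y : M) :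
    (inner ℂ x ((((1 : M →L[ℂ] M) - (c • P + d • ((1 : M →L[ℂ] M) - P)))) y) : ℂ)
      = (1 - c) * inner ℂ x (P y) + (1 - d) * inner ℂ x (((1 : M →L[ℂ] M) - P) y) := by
  have hy : y = P y + ((1 : M →L[ℂ] M) - P) y := by
    simp [ContinuousLinearMap.sub_apply]
  simp only [ContinuousLinearMap.sub_apply, ContinuousLinearMap.add_apply,
    ContinuousLinearMap.smul_apply, ContinuousLinearMap.one_apply]
  rw [inner_sub_right, inner_add_right, inner_smul_right, inner_smul_right]
  nth_rewrite 1 [hy]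
  rw [inner_add_right]
  simp only [ContinuousLinearMap.sub_apply, ContinuousLinearMap.one_apply]
  ring

end Aux

set_option maxHeartbeats 1000000 in
theorem stmt14 {M : Type*} [NormedAddCommGroup M] [InnerProductSpace ℂ M] [CompleteSpace M]
    (φ : ℂ × ℂ → ℂ) (hφd : DifferentiableOn ℂ φ {z : ℂ × ℂ | ‖z‖ < 1})
    (hφb : ∀ z : ℂ × ℂ, ‖z‖ < 1 → ‖φ z‖ ≤ 1)
    (τ : ℂ × ℂ) (hτ1 : ‖τ.1‖ = 1) (hτ2 : ‖τ.2‖ = 1)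
    -- the positive contraction of the model is an orthogonal projection `P`
    (P : M →L[ℂ] M) (hPsa : IsSelfAdjoint P) (hPidem : IsIdempotentElem P)
    (v : ℂ × ℂ → M) (hv : DifferentiableOn ℂ v {z : ℂ × ℂ | ‖z‖ < 1})
    -- `(M, v, I_P)` is a generalized model for `φ`
    (hmodel : ∀ zl zm : ℂ × ℂ, ‖zl‖ < 1 → ‖zm‖ < 1 →
      (1 : ℂ) - starRingEnd ℂ (φ zm) * φ zl =
        (inner ℂ (v zm)
          ((((1 : M →L[ℂ] M) - ContinuousLinearMap.adjoint (IY P τ zm) * IY P τ zl)) (v zl)) : ℂ))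
    -- the model has a `C`-point at `τ`
    (vτ : M)
    (hC : ∀ S : Set (ℂ × ℂ), S ⊆ {z : ℂ × ℂ | ‖z‖ < 1} →
      (∃ c > 0, ∀ z ∈ S, ‖τ - z‖ ≤ c * (1 - ‖z‖)) →
      Tendsto v (nhdsWithin τ S) (nhds vτ)) :
    -- `τ` is a carapoint for `φ`
    (∃ (l : ℕ → ℂ × ℂ) (C : ℝ), (∀ n, ‖l n‖ < 1) ∧ Tendsto l atTop (nhds τ) ∧
      ∀ n, |(1 - ‖φ (l n)‖) / (1 - ‖l n‖)| ≤ C) ∧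
    -- and `φ` is nontangentially differentiable at `τ`
    ∃ (φτ : ℂ) (L : (ℂ × ℂ) →ₗ[ℂ] ℂ), ∀ δ : ℂ × ℂ,
      (starRingEnd ℂ τ.1 * δ.1).re < 0 → (starRingEnd ℂ τ.2 * δ.2).re < 0 →
      Tendsto (fun t : ℝ =>
          (φ (τ.1 + (t : ℂ) * δ.1, τ.2 + (t : ℂ) * δ.2) - φτ) / (t : ℂ))
        (nhdsWithin (0 : ℝ) (Set.Ioi 0)) (nhds (L δ)) := by
  classical
  have hP : P * P = P := hPidem
  have u1 : starRingEnd ℂ τ.1 * τ.1 = 1 := by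
    rw [← Complex.normSq_eq_conj_mul_self]
    norm_cast
    rw [Complex.normSq_eq_norm_sq, hτ1]; norm_num
  have u2 : starRingEnd ℂ τ.2 * τ.2 = 1 := by
    rw [← Complex.normSq_eq_conj_mul_self]
    norm_cast
    rw [Complex.normSq_eq_norm_sq, hτ2]; norm_num
  -- simplified model identity
  have key : ∀ zl zm : ℂ × ℂ, ‖zl‖ < 1 → ‖zm‖ < 1 →
      (1 : ℂ) - starRingEnd ℂ (φ zm) * φ zl
        = (1 - starRingEnd ℂ zm.1 * zl.1) * inner ℂ (v zm) (P (v zl))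
          + (1 - starRingEnd ℂ zm.2 * zl.2)
            * inner ℂ (v zm) (((1 : M →L[ℂ] M) - P) (v zl)) := by
    intro zl zm hzl hzm
    have h := hmodel zl zm hzl hzm
    rw [IY_eq P hP τ zl hτ1 hτ2 hzl, IY_eq P hP τ zm hτ1 hτ2 hzm, adj_diag P hPsa,
      diag_mul P hP, inner_split] at h
    have e1 : starRingEnd ℂ (starRingEnd ℂ τ.1 * zm.1) * (starRingEnd ℂ τ.1 * zl.1)
        = starRingEnd ℂ zm.1 * zl.1 := by
      simp only [map_mul, Complex.conj_conj]
      linear_combination (starRingEnd ℂ zm.1 * zl.1) * u1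
    have e2 : starRingEnd ℂ (starRingEnd ℂ τ.2 * zm.2) * (starRingEnd ℂ τ.2 * zl.2)
        = starRingEnd ℂ zm.2 * zl.2 := by
      simp only [map_mul, Complex.conj_conj]
      linear_combination (starRingEnd ℂ zm.2 * zl.2) * u2
    rw [h, e1, e2]
  -- the radial curve
  set crv : ℝ → ℂ × ℂ := fun t => ((t : ℂ) * τ.1, (t : ℂ) * τ.2) with hcrv
  have hcn : ∀ t : ℝ, 0 ≤ t → ‖crv t‖ = t := by
    intro t ht
    have hrfl : crv t = ((t:ℂ)*τ.1, (t:ℂ)*τ.2) := rfl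
    rw [hrfl, Prod.norm_def]
    simp only [norm_mul, Complex.norm_real, hτ1, hτ2, mul_one, max_self]
    exact Real.norm_of_nonneg ht
  have hcball : ∀ t ∈ Ioo (0:ℝ) 1, ‖crv t‖ < 1 := by
    intro t ht; rw [hcn t ht.1.le]; exact ht.2
  have hsubn : ∀ t ∈ Ioo (0:ℝ) 1, ‖τ - crv t‖ = 1 - t := by
    intro t ht
    have h1 : (τ - crv t).1 = ((1 - t : ℝ) : ℂ) * τ.1 := by
      simp only [hcrv, Prod.fst_sub]; push_cast; ring
    have h2 : (τ - crv t).2 = ((1 - t : ℝ) : ℂ) * τ.2 := by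
      simp only [hcrv, Prod.snd_sub]; push_cast; ring
    rw [Prod.norm_def, h1, h2]
    simp only [norm_mul, Complex.norm_real, hτ1, hτ2, mul_one, max_self]
    exact Real.norm_of_nonneg (by linarith [ht.2])
  set S : Set (ℂ × ℂ) := crv '' (Ioo 0 1) with hSdef
  have hS1 : S ⊆ {z : ℂ × ℂ | ‖z‖ < 1} := by
    rintro z ⟨t, ht, rfl⟩; exact hcball t ht
  have hS2 : ∃ c > 0, ∀ z ∈ S, ‖τ - z‖ ≤ c * (1 - ‖z‖) := by
    refine ⟨1, one_pos, ?_⟩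
    rintro z ⟨t, ht, rfl⟩
    rw [hsubn t ht, hcn t ht.1.le, one_mul]
  have hcrvcont : Continuous crv := by
    apply Continuous.prodMk <;> exact (Complex.continuous_ofReal.mul continuous_const)
  have hcrv1 : crv 1 = τ := by simp [hcrv]
  have hcrvt : Tendsto crv (nhdsWithin 1 (Ioo (0:ℝ) 1)) (nhdsWithin τ S) := by
    apply tendsto_nhdsWithin_of_tendsto_nhds_of_eventually_within
    · have h := (hcrvcont.tendsto 1).mono_left (nhdsWithin_le_nhds (s := Ioo (0:ℝ) 1))
      rwa [hcrv1] at h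
    · filter_upwards [eventually_mem_nhdsWithin] with t ht using mem_image_of_mem _ ht
  have hvrad : Tendsto (fun t => v (crv t)) (nhdsWithin 1 (Ioo (0:ℝ) 1)) (nhds vτ) :=
    (hC S hS1 hS2).comp hcrvt
  haveI : (nhdsWithin (1:ℝ) (Ioo (0:ℝ) 1)).NeBot := right_nhdsWithin_Ioo_neBot zero_lt_one
  set f : ℝ → ℂ := fun t => starRingEnd ℂ (φ (crv t)) with hfdef
  set G : (ℂ × ℂ) → ℂ := fun lam =>
    (1 - starRingEnd ℂ τ.1 * lam.1) * inner ℂ vτ (P (v lam))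
      + (1 - starRingEnd ℂ τ.2 * lam.2) * inner ℂ vτ (((1 : M →L[ℂ] M) - P) (v lam)) with hGdef
  -- convergence of the polarized identity as μ → τ radially
  have hAll : ∀ lam : ℂ × ℂ, ‖lam‖ < 1 →
      Tendsto (fun t => f t * φ lam) (nhdsWithin 1 (Ioo (0:ℝ) 1)) (nhds (1 - G lam)) := by
    intro lam hlam
    have hfst : Tendsto (fun t => (crv t).1) (nhdsWithin 1 (Ioo (0:ℝ) 1)) (nhds τ.1) := by
      have h := ((continuous_fst.comp hcrvcont).tendsto 1).mono_left
        (nhdsWithin_le_nhds (s := Ioo (0:ℝ) 1))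
      rwa [Function.comp, hcrv1] at h
    have hsnd : Tendsto (fun t => (crv t).2) (nhdsWithin 1 (Ioo (0:ℝ) 1)) (nhds τ.2) := by
      have h := ((continuous_snd.comp hcrvcont).tendsto 1).mono_left
        (nhdsWithin_le_nhds (s := Ioo (0:ℝ) 1))
      rwa [Function.comp, hcrv1] at h
    have hinner1 : Tendsto (fun t => (inner ℂ (v (crv t)) (P (v lam)) : ℂ))
        (nhdsWithin 1 (Ioo (0:ℝ) 1)) (nhds (inner ℂ vτ (P (v lam)))) :=
      hvrad.inner tendsto_const_nhds
    have hinner2 : Tendsto (fun t => (inner ℂ (v (crv t)) (((1 : M →L[ℂ] M) - P) (v lam)) : ℂ))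
        (nhdsWithin 1 (Ioo (0:ℝ) 1)) (nhds (inner ℂ vτ (((1 : M →L[ℂ] M) - P) (v lam)))) :=
      hvrad.inner tendsto_const_nhds
    have base : Tendsto (fun t =>
        (1 - starRingEnd ℂ (crv t).1 * lam.1) * inner ℂ (v (crv t)) (P (v lam))
          + (1 - starRingEnd ℂ (crv t).2 * lam.2)
            * inner ℂ (v (crv t)) (((1 : M →L[ℂ] M) - P) (v lam)))
        (nhdsWithin 1 (Ioo (0:ℝ) 1)) (nhds (G lam)) := by
      rw [hGdef]
      exact (((tendsto_const_nhds.sub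
          (((Complex.continuous_conj.tendsto τ.1).comp hfst).mul tendsto_const_nhds)).mul
          hinner1).add ((tendsto_const_nhds.sub
          (((Complex.continuous_conj.tendsto τ.2).comp hsnd).mul tendsto_const_nhds)).mul
          hinner2))
    have hleft : Tendsto (fun t => (1:ℂ) - f t * φ lam)
        (nhdsWithin 1 (Ioo (0:ℝ) 1)) (nhds (G lam)) := by
      refine base.congr' ?_
      filter_upwards [eventually_mem_nhdsWithin] with t ht
      exact (key lam (crv t) hlam (hcball t ht)).symm
    have h := (tendsto_const_nhds (x := (1:ℂ))).sub hleft
    simpa using h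
  -- the diagonal identity along the radial curve
  have hdiagid : ∀ t ∈ Ioo (0:ℝ) 1,
      (1:ℂ) - f t * φ (crv t) = ((1 - t^2 : ℝ) : ℂ) * (‖v (crv t)‖ : ℂ)^2 := by
    intro t ht
    have h := key (crv t) (crv t) (hcball t ht) (hcball t ht)
    have c1 : starRingEnd ℂ (crv t).1 * (crv t).1 = (t:ℂ)^2 := by
      simp only [hcrv, map_mul, Complex.conj_ofReal]
      linear_combination (t:ℂ)^2 * u1
    have c2 : starRingEnd ℂ (crv t).2 * (crv t).2 = (t:ℂ)^2 := by
      simp only [hcrv, map_mul, Complex.conj_ofReal]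
      linear_combination (t:ℂ)^2 * u2
    have hsplit : (inner ℂ (v (crv t)) (P (v (crv t))) : ℂ)
        + inner ℂ (v (crv t)) (((1 : M →L[ℂ] M) - P) (v (crv t)))
        = (‖v (crv t)‖ : ℂ)^2 := by
      rw [← inner_add_right]
      have hx : P (v (crv t)) + ((1 : M →L[ℂ] M) - P) (v (crv t)) = v (crv t) := by
        simp [ContinuousLinearMap.sub_apply]
      rw [hx]
      exact inner_self_eq_norm_sq_to_K _
    rw [h, c1, c2]
    simp only [Complex.ofReal_sub, Complex.ofReal_one, Complex.ofReal_pow]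
    linear_combination ((1:ℂ) - (t:ℂ)^2) * hsplit
  have hdiag1 : Tendsto (fun t => f t * φ (crv t)) (nhdsWithin 1 (Ioo (0:ℝ) 1)) (nhds 1) := by
    have hrhs : Tendsto (fun t => ((1 - t^2 : ℝ) : ℂ) * (‖v (crv t)‖ : ℂ)^2)
        (nhdsWithin 1 (Ioo (0:ℝ) 1)) (nhds 0) := by
      have h1 : Tendsto (fun t : ℝ => ((1 - t^2 : ℝ) : ℂ))
          (nhdsWithin 1 (Ioo (0:ℝ) 1)) (nhds 0) := by
        have hcont : Continuous (fun t : ℝ => ((1 - t^2 : ℝ) : ℂ)) := by fun_prop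
        have h := (hcont.tendsto 1).mono_left (nhdsWithin_le_nhds (s := Ioo (0:ℝ) 1))
        simpa using h
      have h2 : Tendsto (fun t => (‖v (crv t)‖ : ℂ)^2)
          (nhdsWithin 1 (Ioo (0:ℝ) 1)) (nhds ((‖vτ‖ : ℂ)^2)) :=
        ((Complex.continuous_ofReal.tendsto _).comp hvrad.norm).pow 2
      simpa using h1.mul h2
    have hleft : Tendsto (fun t => (1:ℂ) - f t * φ (crv t))
        (nhdsWithin 1 (Ioo (0:ℝ) 1)) (nhds 0) := by
      refine hrhs.congr' ?_
      filter_upwards [eventually_mem_nhdsWithin] with t ht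
      exact (hdiagid t ht).symm
    have h := (tendsto_const_nhds (x := (1:ℂ))).sub hleft
    simpa using h
  -- find a point where φ does not vanish
  obtain ⟨t₁, hne, ht₁⟩ :=
    ((hdiag1.eventually_ne one_ne_zero).and eventually_mem_nhdsWithin).exists
  have hphi0 : φ (crv t₁) ≠ 0 := fun h => hne (by simp [hfdef, h])
  have hlam0 : ‖crv t₁‖ < 1 := hcball t₁ ht₁
  set w : ℂ := (1 - G (crv t₁)) / φ (crv t₁) with hwdef
  have hfw : Tendsto f (nhdsWithin 1 (Ioo (0:ℝ) 1)) (nhds w) := by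
    have h := (hAll (crv t₁) hlam0).div_const (φ (crv t₁))
    exact h.congr (fun t => mul_div_cancel_right₀ (f t) hphi0)
  have hwall : ∀ lam : ℂ × ℂ, ‖lam‖ < 1 → w * φ lam = 1 - G lam := fun lam h =>
    tendsto_nhds_unique (hfw.mul_const _) (hAll lam h)
  have hconjf : Tendsto (fun t => φ (crv t)) (nhdsWithin 1 (Ioo (0:ℝ) 1))
      (nhds (starRingEnd ℂ w)) := by
    have h := (Complex.continuous_conj.tendsto w).comp hfw
    refine h.congr (fun t => ?_)
    simp [hfdef, Function.comp]
  have hw1 : w * starRingEnd ℂ w = 1 := tendsto_nhds_unique (hfw.mul hconjf) hdiag1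
  set φτ : ℂ := starRingEnd ℂ w with hφτdef
  have hform : ∀ lam : ℂ × ℂ, ‖lam‖ < 1 → φ lam = φτ * (1 - G lam) := by
    intro lam h
    have h2 := hwall lam h
    calc φ lam = (starRingEnd ℂ w * w) * φ lam := by
          rw [mul_comm (starRingEnd ℂ w) w, hw1, one_mul]
    _ = starRingEnd ℂ w * (w * φ lam) := mul_assoc _ _ _
    _ = φτ * (1 - G lam) := by rw [h2, hφτdef]
  constructor
  · -- carapoint
    set r : ℕ → ℝ := fun n => 1 - 1/(n+2) with hrdef
    have hr : ∀ n, r n ∈ Ioo (0:ℝ) 1 := by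
      intro n
      have h2 : (0:ℝ) < (n:ℝ) + 2 := by positivity
      constructor
      · simp only [hrdef, sub_pos]
        rw [div_lt_one h2]; linarith
      · simp only [hrdef, sub_lt_self_iff]; positivity
    have hrt : Tendsto r atTop (nhds 1) := by
      have h0 : Tendsto (fun n : ℕ => ((n:ℝ)+2)⁻¹) atTop (nhds 0) :=
        (tendsto_atTop_add_const_right atTop 2 tendsto_natCast_atTop_atTop).inv_tendsto_atTop
      have h := (tendsto_const_nhds (x := (1:ℝ))).sub h0
      simpa [hrdef, one_div] using h
    have hlne : ∀ n, ‖crv (r n)‖ < 1 := fun n => hcball (r n) (hr n)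
    have hlt : Tendsto (fun n => crv (r n)) atTop (nhds τ) := by
      have h := (hcrvcont.tendsto 1).comp hrt
      rwa [hcrv1] at h
    have hrt' : Tendsto r atTop (nhdsWithin 1 (Ioo (0:ℝ) 1)) :=
      tendsto_nhdsWithin_of_tendsto_nhds_of_eventually_within r hrt
        (Eventually.of_forall hr)
    have hvl : Tendsto (fun n => 2 * ‖v (crv (r n))‖^2) atTop (nhds (2 * ‖vτ‖^2)) := by
      have h := (hvrad.comp hrt').norm
      exact (h.pow 2).const_mul 2
    obtain ⟨C, hCb⟩ := hvl.bddAbove_range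
    refine ⟨fun n => crv (r n), C, hlne, hlt, fun n => ?_⟩
    have hrn := hr n
    have hln : ‖crv (r n)‖ = r n := hcn (r n) hrn.1.le
    have hdpos : (0:ℝ) < 1 - r n := by linarith [hrn.2]
    have hφle : ‖φ (crv (r n))‖ ≤ 1 := hφb _ (hlne n)
    have hφpos : (0:ℝ) ≤ ‖φ (crv (r n))‖ := norm_nonneg _
    have hidC := hdiagid (r n) hrn
    have hfφ : f (r n) * φ (crv (r n)) = (Complex.normSq (φ (crv (r n))) : ℂ) := by
      rw [Complex.normSq_eq_conj_mul_self]
    rw [hfφ] at hidC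
    have hidR : 1 - Complex.normSq (φ (crv (r n))) = (1 - (r n)^2) * ‖v (crv (r n))‖^2 := by
      have h : ((1 - Complex.normSq (φ (crv (r n))) : ℝ) : ℂ)
          = (((1 - (r n)^2) * ‖v (crv (r n))‖^2 : ℝ) : ℂ) := by
        rw [show (((1 - (r n)^2) * ‖v (crv (r n))‖^2 : ℝ) : ℂ)
            = ((1 - (r n)^2 : ℝ):ℂ) * ((‖v (crv (r n))‖ : ℝ):ℂ)^2 by push_cast; ring, ← hidC]
        push_cast
        ring
      exact_mod_cast h
    have hnsq : Complex.normSq (φ (crv (r n))) = ‖φ (crv (r n))‖^2 := by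
      rw [← Complex.sq_norm]
    have hbound : (1 - ‖φ (crv (r n))‖) / (1 - ‖crv (r n)‖) ≤ 2 * ‖v (crv (r n))‖^2 := by
      rw [hln, div_le_iff₀ hdpos]
      nlinarith [hidR, hnsq, sq_nonneg (‖v (crv (r n))‖), hrn.1, hrn.2,
        mul_nonneg (sub_nonneg.2 hφle) hφpos,
        mul_nonneg (sub_nonneg.2 hrn.2.le) (sq_nonneg (‖v (crv (r n))‖))]
    have habs : |(1 - ‖φ (crv (r n))‖) / (1 - ‖crv (r n)‖)|
        = (1 - ‖φ (crv (r n))‖) / (1 - ‖crv (r n)‖) := by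
      apply _root_.abs_of_nonneg
      apply div_nonneg (by linarith) (by rw [hln]; linarith)
    rw [habs]
    exact le_trans hbound (hCb ⟨n, rfl⟩)
  · -- nontangential differentiability
    set c1 : ℂ := φτ * (starRingEnd ℂ τ.1 * inner ℂ vτ (P vτ)) with hc1def
    set c2 : ℂ := φτ * (starRingEnd ℂ τ.2 * inner ℂ vτ (((1 : M →L[ℂ] M) - P) vτ)) with hc2def
    refine ⟨φτ, c1 • LinearMap.fst ℂ ℂ ℂ + c2 • LinearMap.snd ℂ ℂ ℂ, ?_⟩
    intro δ hd1 hd2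
    set m1 : ℝ := -(starRingEnd ℂ τ.1 * δ.1).re with hm1def
    set m2 : ℝ := -(starRingEnd ℂ τ.2 * δ.2).re with hm2def
    have hm1 : 0 < m1 := by rw [hm1def]; linarith
    have hm2 : 0 < m2 := by rw [hm2def]; linarith
    set m : ℝ := min m1 m2 with hmdef
    have hm : 0 < m := lt_min hm1 hm2
    set K : ℝ := max (‖δ.1‖^2) (‖δ.2‖^2) with hKdef
    have hK : 0 ≤ K := le_trans (sq_nonneg _) (le_max_left _ _)
    set t0 : ℝ := min (m/(K+1)) (1/(m+1)) with ht0def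
    have ht0 : 0 < t0 := lt_min (by positivity) (by positivity)
    set lamt : ℝ → ℂ × ℂ := fun t => (τ.1 + (t:ℂ)*δ.1, τ.2 + (t:ℂ)*δ.2) with hlamtdef
    have hcoord : ∀ t ∈ Ioo (0:ℝ) t0, ∀ (x d : ℂ), ‖x‖ = 1 →
        m ≤ -(starRingEnd ℂ x * d).re → ‖d‖^2 ≤ K → ‖x + (t:ℂ)*d‖ ≤ 1 - m*t/2 := by
      intro t ht x d hx hmx hdK
      have htpos : 0 < t := ht.1
      have ht1 : t * (K+1) ≤ m := by
        have h : t ≤ m/(K+1) := le_trans ht.2.le (min_le_left _ _)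
        rwa [le_div_iff₀ (by positivity)] at h
      have ht2 : t * (m+1) ≤ 1 := by
        have h : t ≤ 1/(m+1) := le_trans ht.2.le (min_le_right _ _)
        rwa [le_div_iff₀ (by positivity)] at h
      have hnsq : Complex.normSq (x + (t:ℂ)*d)
          = 1 + t^2 * Complex.normSq d - 2 * t * (-(starRingEnd ℂ x * d).re) := by
        rw [Complex.normSq_add]
        have hx2 : Complex.normSq x = 1 := by
          rw [← Complex.sq_norm, hx]; norm_num
        have hmul : Complex.normSq ((t:ℂ)*d) = t^2 * Complex.normSq d := by
          rw [Complex.normSq_mul, Complex.normSq_ofReal]; ring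
        have hre : (x * starRingEnd ℂ ((t:ℂ)*d)).re = t * (starRingEnd ℂ x * d).re := by
          rw [map_mul, Complex.conj_ofReal]
          have harr : x * ((t:ℂ) * starRingEnd ℂ d) = (t:ℂ) * (x * starRingEnd ℂ d) := by ring
          rw [harr, Complex.re_ofReal_mul]
          congr 1
          have hcc : x * starRingEnd ℂ d = starRingEnd ℂ (starRingEnd ℂ x * d) := by
            rw [map_mul, Complex.conj_conj]
          rw [hcc, Complex.conj_re]
        rw [hx2, hmul, hre]; ring
      have hdn : Complex.normSq d = ‖d‖^2 := by
        rw [← Complex.sq_norm]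
      have hsq : Complex.normSq (x + (t:ℂ)*d) ≤ 1 - m*t := by
        rw [hnsq, hdn]
        nlinarith [mul_le_mul_of_nonneg_left hdK htpos.le,
          mul_le_mul_of_nonneg_left hmx htpos.le, htpos]
      have hmt1 : m * t ≤ 1 := by nlinarith
      have hfin : Complex.normSq (x + (t:ℂ)*d) ≤ (1 - m*t/2)^2 := by
        nlinarith [hsq, sq_nonneg (m*t)]
      calc ‖x + (t:ℂ)*d‖ = Real.sqrt (Complex.normSq (x + (t:ℂ)*d)) := by
            rw [Complex.norm_def]
      _ ≤ Real.sqrt ((1 - m*t/2)^2) := Real.sqrt_le_sqrt hfin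
      _ = 1 - m*t/2 := Real.sqrt_sq (by nlinarith)
    have hlamn : ∀ t ∈ Ioo (0:ℝ) t0, ‖lamt t‖ ≤ 1 - m*t/2 := by
      intro t ht
      rw [hlamtdef, Prod.norm_def]
      apply max_le
      · refine hcoord t ht τ.1 δ.1 hτ1 ?_ (le_max_left _ _)
        rw [← hm1def]; exact min_le_left m1 m2
      · refine hcoord t ht τ.2 δ.2 hτ2 ?_ (le_max_right _ _)
        rw [← hm2def]; exact min_le_right m1 m2
    have hlamball : ∀ t ∈ Ioo (0:ℝ) t0, ‖lamt t‖ < 1 := by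
      intro t ht
      have h := hlamn t ht
      nlinarith [ht.1, hm]
    have hdnorm : ∀ t ∈ Ioo (0:ℝ) t0, ‖τ - lamt t‖ = t * ‖δ‖ := by
      intro t ht
      have h1 : (τ - lamt t).1 = -((t:ℂ) * δ.1) := by
        simp only [hlamtdef, Prod.fst_sub]; ring
      have h2 : (τ - lamt t).2 = -((t:ℂ) * δ.2) := by
        simp only [hlamtdef, Prod.snd_sub]; ring
      rw [Prod.norm_def, h1, h2, norm_neg, norm_neg, norm_mul, norm_mul, Complex.norm_real,
        Real.norm_of_nonneg ht.1.le, Prod.norm_def]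
      exact (mul_max_of_nonneg _ _ ht.1.le).symm
    set Sδ : Set (ℂ × ℂ) := lamt '' Ioo 0 t0 with hSδdef
    have hSδ1 : Sδ ⊆ {z : ℂ × ℂ | ‖z‖ < 1} := by
      rintro z ⟨t, ht, rfl⟩; exact hlamball t ht
    have hSδ2 : ∃ c > 0, ∀ z ∈ Sδ, ‖τ - z‖ ≤ c * (1 - ‖z‖) := by
      refine ⟨(2*‖δ‖+1)/m, div_pos (by positivity) hm, ?_⟩
      rintro z ⟨t, ht, rfl⟩
      rw [hdnorm t ht]
      have h := hlamn t ht
      have e : (2*‖δ‖+1)/m * (m*t/2) = (2*‖δ‖+1)*t/2 := by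
        field_simp
      calc t * ‖δ‖ ≤ (2*‖δ‖+1)*t/2 := by nlinarith [norm_nonneg δ, ht.1.le]
      _ = (2*‖δ‖+1)/m * (m*t/2) := e.symm
      _ ≤ (2*‖δ‖+1)/m * (1 - ‖lamt t‖) := by
          apply mul_le_mul_of_nonneg_left (by linarith) (by positivity)
    have hlamcont : Continuous lamt := by
      rw [hlamtdef]
      apply Continuous.prodMk <;>
        exact continuous_const.add (Complex.continuous_ofReal.mul continuous_const)
    have hlam00 : lamt 0 = τ := by simp [hlamtdef]
    have hIooMem : Ioo (0:ℝ) t0 ∈ nhdsWithin (0:ℝ) (Ioi 0) := Ioo_mem_nhdsGT ht0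
    have htdto : Tendsto lamt (nhdsWithin (0:ℝ) (Ioi 0)) (nhdsWithin τ Sδ) := by
      apply tendsto_nhdsWithin_of_tendsto_nhds_of_eventually_within
      · have h := (hlamcont.tendsto 0).mono_left (nhdsWithin_le_nhds (s := Ioi (0:ℝ)))
        rwa [hlam00] at h
      · filter_upwards [hIooMem] with t ht using mem_image_of_mem _ ht
    have hvt : Tendsto (fun t => v (lamt t)) (nhdsWithin (0:ℝ) (Ioi 0)) (nhds vτ) :=
      (hC Sδ hSδ1 hSδ2).comp htdto
    have i1 : Tendsto (fun t => (inner ℂ vτ (P (v (lamt t))) : ℂ))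
        (nhdsWithin (0:ℝ) (Ioi 0)) (nhds (inner ℂ vτ (P vτ))) :=
      tendsto_const_nhds.inner ((P.continuous.tendsto vτ).comp hvt)
    have i2 : Tendsto (fun t => (inner ℂ vτ (((1 : M →L[ℂ] M) - P) (v (lamt t))) : ℂ))
        (nhdsWithin (0:ℝ) (Ioi 0)) (nhds (inner ℂ vτ (((1 : M →L[ℂ] M) - P) vτ))) :=
      tendsto_const_nhds.inner ((((1 : M →L[ℂ] M) - P).continuous.tendsto vτ).comp hvt)
    have hlim : Tendsto (fun t : ℝ => φτ * (starRingEnd ℂ τ.1 * δ.1 * inner ℂ vτ (P (v (lamt t)))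
        + starRingEnd ℂ τ.2 * δ.2 * inner ℂ vτ (((1 : M →L[ℂ] M) - P) (v (lamt t)))))
        (nhdsWithin (0:ℝ) (Ioi 0))
        (nhds (φτ * (starRingEnd ℂ τ.1 * δ.1 * inner ℂ vτ (P vτ)
          + starRingEnd ℂ τ.2 * δ.2 * inner ℂ vτ (((1 : M →L[ℂ] M) - P) vτ)))) :=
      tendsto_const_nhds.mul ((tendsto_const_nhds.mul i1).add (tendsto_const_nhds.mul i2))
    have hLδ : (c1 • LinearMap.fst ℂ ℂ ℂ + c2 • LinearMap.snd ℂ ℂ ℂ) δ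
        = φτ * (starRingEnd ℂ τ.1 * δ.1 * inner ℂ vτ (P vτ)
          + starRingEnd ℂ τ.2 * δ.2 * inner ℂ vτ (((1 : M →L[ℂ] M) - P) vτ)) := by
      simp only [LinearMap.add_apply, LinearMap.smul_apply, LinearMap.fst_apply,
        LinearMap.snd_apply, smul_eq_mul, hc1def, hc2def]
      ring
    rw [hLδ]
    refine Tendsto.congr' ?_ hlim
    filter_upwards [hIooMem] with t ht
    have hball := hlamball t ht
    have htne : ((t:ℝ):ℂ) ≠ 0 := by
      simp only [ne_eq, Complex.ofReal_eq_zero]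
      exact ne_of_gt ht.1
    have hGl : G (lamt t) = -(t:ℂ) * (starRingEnd ℂ τ.1 * δ.1 * inner ℂ vτ (P (v (lamt t)))
        + starRingEnd ℂ τ.2 * δ.2 * inner ℂ vτ (((1 : M →L[ℂ] M) - P) (v (lamt t)))) := by
      rw [hGdef]
      simp only [hlamtdef]
      linear_combination (-(inner ℂ vτ (P (v (lamt t))) : ℂ)) * u1
        + (-(inner ℂ vτ (((1 : M →L[ℂ] M) - P) (v (lamt t))) : ℂ)) * u2
    have hφeq : φ (τ.1 + (t:ℂ)*δ.1, τ.2 + (t:ℂ)*δ.2) = φτ * (1 - G (lamt t)) :=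
      hform (lamt t) hball
    rw [eq_div_iff htne] at *
    rw [hφeq, hGl]
    ring
end

section
/- Let φ be a nonconstant holomorphic function on 𝔻² with |φ| ≤ 1 that has a carapoint at τ ∈ 𝕋², and let (M, v, I_Y) be a generalized model for φ with a C-point at τ with limit value v_τ. Then ‖v_τ‖ > 0. -/
open Complex Filter Set

theorem stmt16 {M : Type*} [NormedAddCommGroup M] [InnerProductSpace ℂ M] [CompleteSpace M]
    (φ : ℂ × ℂ → ℂ) (hφd : DifferentiableOn ℂ φ {z : ℂ × ℂ | ‖z‖ < 1})
    (hφb : ∀ z : ℂ × ℂ, ‖z‖ < 1 → ‖φ z‖ ≤ 1)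
    -- `φ` is nonconstant
    (hφnc : ∃ a b : ℂ × ℂ, ‖a‖ < 1 ∧ ‖b‖ < 1 ∧ φ a ≠ φ b)
    (τ : ℂ × ℂ) (hτ1 : ‖τ.1‖ = 1) (hτ2 : ‖τ.2‖ = 1)
    -- `τ` is a carapoint for `φ`
    (hcara : ∃ (l : ℕ → ℂ × ℂ) (C : ℝ), (∀ n, ‖l n‖ < 1) ∧ Tendsto l atTop (nhds τ) ∧
      ∀ n, |(1 - ‖φ (l n)‖) / (1 - ‖l n‖)| ≤ C)
    (Y : M →L[ℂ] M) (hY : Y.IsPositive) (hY' : ((1 : M →L[ℂ] M) - Y).IsPositive)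
    (v : ℂ × ℂ → M) (hv : DifferentiableOn ℂ v {z : ℂ × ℂ | ‖z‖ < 1})
    -- `(M, v, I_Y)` is a generalized model for `φ`
    (hmodel : ∀ zl zm : ℂ × ℂ, ‖zl‖ < 1 → ‖zm‖ < 1 →
      (1 : ℂ) - starRingEnd ℂ (φ zm) * φ zl =
        (inner ℂ (v zm)
          ((((1 : M →L[ℂ] M) - ContinuousLinearMap.adjoint (IY Y τ zm) * IY Y τ zl)) (v zl)) : ℂ))
    -- with a `C`-point at `τ` with limit value `vτ`
    (vτ : M)
    (hC : ∀ S : Set (ℂ × ℂ), S ⊆ {z : ℂ × ℂ | ‖z‖ < 1} →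
      (∃ c > 0, ∀ z ∈ S, ‖τ - z‖ ≤ c * (1 - ‖z‖)) →
      Tendsto v (nhdsWithin τ S) (nhds vτ)) :
    0 < ‖vτ‖ := by
  by_contra hcon
  push_neg at hcon
  have hvτ : vτ = 0 := norm_eq_zero.mp (le_antisymm hcon (norm_nonneg vτ))
  -- the norm of τ is 1
  have hτ : ‖τ‖ = 1 := by rw [Prod.norm_def, hτ1, hτ2]; simp
  -- the radial sequence
  set l : ℕ → ℂ × ℂ := fun n => (((1 - 1/(n+2) : ℝ)) : ℂ) • τ with hl
  have hrpos : ∀ n : ℕ, (0:ℝ) < 1 - 1/(n+2) := by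
    intro n
    have h2 : (0:ℝ) < (n:ℝ) + 2 := by positivity
    have : 1/((n:ℝ)+2) < 1 := by
      rw [div_lt_one h2]; linarith [Nat.cast_nonneg (α := ℝ) n]
    linarith
  have hrlt : ∀ n : ℕ, (1 - 1/((n:ℝ)+2)) < 1 := by
    intro n
    have h2 : (0:ℝ) < (n:ℝ) + 2 := by positivity
    have : 0 < 1/((n:ℝ)+2) := by positivity
    linarith
  have hln : ∀ n, ‖l n‖ = 1 - 1/((n:ℝ)+2) := by
    intro n
    rw [hl]
    simp only [norm_smul, hτ, mul_one, Complex.norm_real, Real.norm_eq_abs]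
    exact abs_of_pos (hrpos n)
  have hllt : ∀ n, ‖l n‖ < 1 := fun n => (hln n) ▸ hrlt n
  -- l tends to τ
  have hrt : Tendsto (fun n : ℕ => (1 - 1/((n:ℝ)+2))) atTop (nhds 1) := by
    have h1 : Tendsto (fun n : ℕ => ((n:ℝ)+2)) atTop atTop :=
      tendsto_atTop_add_const_right atTop 2 tendsto_natCast_atTop_atTop
    have h2 : Tendsto (fun n : ℕ => 1/((n:ℝ)+2)) atTop (nhds 0) := by
      simpa [one_div, Function.comp_def] using tendsto_inv_atTop_zero.comp h1
    simpa using tendsto_const_nhds.sub h2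
  have hlt : Tendsto l atTop (nhds τ) := by
    have h1 : Tendsto (fun n : ℕ => (((1 - 1/((n:ℝ)+2)) : ℝ) : ℂ)) atTop (nhds (1:ℂ)) := by
      exact (Complex.continuous_ofReal.tendsto 1).comp hrt
    have := h1.smul_const τ
    simpa [hl] using this
  -- the range of l is in the C-point set
  have hsub : Set.range l ⊆ {z : ℂ × ℂ | ‖z‖ < 1} := by
    rintro _ ⟨n, rfl⟩; exact hllt n
  have hbound : ∀ z ∈ Set.range l, ‖τ - z‖ ≤ 1 * (1 - ‖z‖) := by
    rintro _ ⟨n, rfl⟩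
    have heq : τ - l n = (((1/((n:ℝ)+2) : ℝ)) : ℂ) • τ := by
      simp only [hl]
      module
    rw [heq, hln n, norm_smul, hτ]
    simp only [Complex.norm_real, Real.norm_eq_abs, mul_one, one_mul]
    rw [abs_of_pos (by positivity)]
    ring_nf
    try exact le_rfl
  have hCtend : Tendsto v (nhdsWithin τ (Set.range l)) (nhds vτ) :=
    hC (Set.range l) hsub ⟨1, one_pos, hbound⟩
  have hvl : Tendsto (fun n => v (l n)) atTop (nhds vτ) := by
    refine hCtend.comp ?_
    rw [tendsto_nhdsWithin_iff]
    exact ⟨hlt, Filter.Eventually.of_forall (fun n => Set.mem_range_self n)⟩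
  have hwn : Tendsto (fun n => ‖v (l n)‖) atTop (nhds 0) := by
    have := hvl.norm
    rwa [hvτ, norm_zero] at this
  -- diagonal estimate : ‖I_Y(z) v z‖ ≤ ‖v z‖
  have hBle : ∀ z : ℂ × ℂ, ‖z‖ < 1 → ‖IY Y τ z (v z)‖ ≤ ‖v z‖ := by
    intro z hz
    have h1 := hmodel z z hz hz
    have h2 : (1 : ℂ) - starRingEnd ℂ (φ z) * φ z =
        ((‖v z‖^2 : ℝ) : ℂ) - ((‖IY Y τ z (v z)‖^2 : ℝ) : ℂ) := by
      rw [h1]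
      rw [ContinuousLinearMap.sub_apply, ContinuousLinearMap.one_apply,
        ContinuousLinearMap.mul_apply, inner_sub_right,
        ContinuousLinearMap.adjoint_inner_right]
      rw [inner_self_eq_norm_sq_to_K, inner_self_eq_norm_sq_to_K]
      norm_num
    have h3 : starRingEnd ℂ (φ z) * φ z = ((‖φ z‖^2 : ℝ) : ℂ) := by
      rw [Complex.conj_mul']
      norm_cast
    rw [h3] at h2
    have h4 : (1 : ℝ) - ‖φ z‖^2 = ‖v z‖^2 - ‖IY Y τ z (v z)‖^2 := by
      have := h2
      rw [← Complex.ofReal_one, ← Complex.ofReal_sub, ← Complex.ofReal_sub] at this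
      exact_mod_cast this
    have h5 : ‖φ z‖ ≤ 1 := hφb z hz
    nlinarith [norm_nonneg (IY Y τ z (v z)), norm_nonneg (v z), norm_nonneg (φ z)]
  -- cross estimate and limit
  have hcross : ∀ a : ℂ × ℂ, ‖a‖ < 1 →
      Tendsto (fun n => starRingEnd ℂ (φ a) * φ (l n)) atTop (nhds 1) := by
    intro a ha
    have key : ∀ n, ‖(1 : ℂ) - starRingEnd ℂ (φ a) * φ (l n)‖ ≤
        (‖v a‖ + ‖IY Y τ a (v a)‖) * ‖v (l n)‖ := by
      intro n
      have h1 := hmodel (l n) a (hllt n) ha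
      rw [ContinuousLinearMap.sub_apply, ContinuousLinearMap.one_apply,
        ContinuousLinearMap.mul_apply, inner_sub_right,
        ContinuousLinearMap.adjoint_inner_right] at h1
      rw [h1]
      calc ‖(inner ℂ (v a) (v (l n)) : ℂ) - (inner ℂ (IY Y τ a (v a)) (IY Y τ (l n) (v (l n))) : ℂ)‖
          ≤ ‖(inner ℂ (v a) (v (l n)) : ℂ)‖ +
            ‖(inner ℂ (IY Y τ a (v a)) (IY Y τ (l n) (v (l n))) : ℂ)‖ := norm_sub_le _ _
        _ ≤ ‖v a‖ * ‖v (l n)‖ + ‖IY Y τ a (v a)‖ * ‖IY Y τ (l n) (v (l n))‖ :=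
            add_le_add (norm_inner_le_norm _ _) (norm_inner_le_norm _ _)
        _ ≤ ‖v a‖ * ‖v (l n)‖ + ‖IY Y τ a (v a)‖ * ‖v (l n)‖ := by
            gcongr
            exact hBle (l n) (hllt n)
        _ = (‖v a‖ + ‖IY Y τ a (v a)‖) * ‖v (l n)‖ := by ring
    have hz : Tendsto (fun n => ‖(1 : ℂ) - starRingEnd ℂ (φ a) * φ (l n)‖) atTop (nhds 0) := by
      have hK : Tendsto (fun n => (‖v a‖ + ‖IY Y τ a (v a)‖) * ‖v (l n)‖) atTop (nhds 0) := by
        simpa using hwn.const_mul (‖v a‖ + ‖IY Y τ a (v a)‖)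
      exact squeeze_zero (fun n => norm_nonneg _) key hK
    have hz' : Tendsto (fun n => (1 : ℂ) - starRingEnd ℂ (φ a) * φ (l n)) atTop (nhds 0) :=
      tendsto_zero_iff_norm_tendsto_zero.mpr hz
    have := Filter.Tendsto.sub
      (tendsto_const_nhds : Tendsto (fun _ : ℕ => (1 : ℂ)) atTop (nhds 1)) hz'
    simpa using this
  obtain ⟨a, b, ha, hb, hab⟩ := hφnc
  have ha' := hcross a ha
  have hb' := hcross b hb
  have h1 : Tendsto (fun n => starRingEnd ℂ (φ b) * (starRingEnd ℂ (φ a) * φ (l n))) atTop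
      (nhds (starRingEnd ℂ (φ b))) := by
    simpa using ha'.const_mul (starRingEnd ℂ (φ b))
  have h2 : Tendsto (fun n => starRingEnd ℂ (φ b) * (starRingEnd ℂ (φ a) * φ (l n))) atTop
      (nhds (starRingEnd ℂ (φ a))) := by
    have := hb'.const_mul (starRingEnd ℂ (φ a))
    simp only [mul_one] at this
    convert this using 2 with n
    ring
  have : starRingEnd ℂ (φ b) = starRingEnd ℂ (φ a) := tendsto_nhds_unique h1 h2
  exact hab ((starRingEnd ℂ).injective this).symm
end

section
/- Let φ be holomorphic on 𝔻² with |φ| ≤ 1, τ ∈ 𝕋², and suppose φ has a generalized model (M, v, I_Y) with a C-point at τ. Then τ is a carapoint for φ: there is a sequence λ_n ∈ 𝔻² tending to τ along which (1 − |φ(λ_n)|)/(1 − ‖λ_n‖_∞) is bounded. -/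
open Complex Filter Set

lemma ringInverse_smul_one {M : Type*} [NormedAddCommGroup M] [InnerProductSpace ℂ M]
    [CompleteSpace M] (c : ℂ) (hc : c ≠ 0) :
    Ring.inverse (c • (1 : M →L[ℂ] M)) = c⁻¹ • (1 : M →L[ℂ] M) := by
  have h1 : (c • (1 : M →L[ℂ] M)) * (c⁻¹ • 1) = 1 := by
    rw [smul_mul_smul_comm, mul_inv_cancel₀ hc, one_mul, one_smul]
  have h2 : (c⁻¹ • (1 : M →L[ℂ] M)) * (c • 1) = 1 := by
    rw [smul_mul_smul_comm, inv_mul_cancel₀ hc, one_mul, one_smul]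
  have : Ring.inverse ((⟨c • 1, c⁻¹ • 1, h1, h2⟩ : (M →L[ℂ] M)ˣ) : M →L[ℂ] M)
      = ((⟨c • 1, c⁻¹ • 1, h1, h2⟩ : (M →L[ℂ] M)ˣ)⁻¹ : (M →L[ℂ] M)ˣ) :=
    Ring.inverse_unit _
  simpa using this

lemma IY_smul {M : Type*} [NormedAddCommGroup M] [InnerProductSpace ℂ M]
    [CompleteSpace M] (Y : M →L[ℂ] M) (τ : ℂ × ℂ) (hτ1 : ‖τ.1‖ = 1) (hτ2 : ‖τ.2‖ = 1)
    (r : ℝ) (hr : r < 1) :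
    IY Y τ ((r : ℂ) • τ) = (r : ℂ) • 1 := by
  have hc1 : starRingEnd ℂ τ.1 * τ.1 = 1 := by
    rw [mul_comm, Complex.mul_conj]
    norm_cast
    simp [Complex.normSq_eq_norm_sq, hτ1]
  have hc2 : starRingEnd ℂ τ.2 * τ.2 = 1 := by
    rw [mul_comm, Complex.mul_conj]
    norm_cast
    simp [Complex.normSq_eq_norm_sq, hτ2]
  have hz1 : ((r : ℂ) • τ).1 = (r : ℂ) * τ.1 := rfl
  have hz2 : ((r : ℂ) • τ).2 = (r : ℂ) * τ.2 := rfl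
  have e1 : starRingEnd ℂ τ.1 * ((r : ℂ) * τ.1) = (r : ℂ) := by
    rw [show starRingEnd ℂ τ.1 * ((r : ℂ) * τ.1) = (r : ℂ) * (starRingEnd ℂ τ.1 * τ.1) by ring,
      hc1, mul_one]
  have e2 : starRingEnd ℂ τ.2 * ((r : ℂ) * τ.2) = (r : ℂ) := by
    rw [show starRingEnd ℂ τ.2 * ((r : ℂ) * τ.2) = (r : ℂ) * (starRingEnd ℂ τ.2 * τ.2) by ring,
      hc2, mul_one]
  have e3 : starRingEnd ℂ τ.1 * starRingEnd ℂ τ.2 * ((r : ℂ) * τ.1) * ((r : ℂ) * τ.2)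
      = (r : ℂ) * (r : ℂ) := by
    rw [show starRingEnd ℂ τ.1 * starRingEnd ℂ τ.2 * ((r : ℂ) * τ.1) * ((r : ℂ) * τ.2)
      = ((r : ℂ) * (r : ℂ)) * ((starRingEnd ℂ τ.1 * τ.1) * (starRingEnd ℂ τ.2 * τ.2)) by ring,
      hc1, hc2]; ring
  have hnum : (starRingEnd ℂ τ.1 * ((r : ℂ) • τ).1) • Y
      + (starRingEnd ℂ τ.2 * ((r : ℂ) • τ).2) • ((1 : M →L[ℂ] M) - Y)
      - (starRingEnd ℂ τ.1 * starRingEnd ℂ τ.2 * ((r : ℂ) • τ).1 * ((r : ℂ) • τ).2)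
          • (1 : M →L[ℂ] M)
      = ((r : ℂ) * (1 - (r : ℂ))) • (1 : M →L[ℂ] M) := by
    rw [hz1, hz2, e1, e2, e3, smul_sub]
    module
  have hden : (1 : M →L[ℂ] M) - (starRingEnd ℂ τ.1 * ((r : ℂ) • τ).1) • ((1 : M →L[ℂ] M) - Y)
      - (starRingEnd ℂ τ.2 * ((r : ℂ) • τ).2) • Y
      = (1 - (r : ℂ)) • (1 : M →L[ℂ] M) := by
    rw [hz1, hz2, e1, e2, smul_sub]
    module
  have hne : (1 - (r : ℂ)) ≠ 0 := by
    intro h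
    have := congrArg Complex.re h
    simp at this
    linarith
  rw [IY, hnum, hden, ringInverse_smul_one _ hne, smul_mul_smul_comm, one_mul]
  congr 1
  field_simp

theorem stmt17 {M : Type*} [NormedAddCommGroup M] [InnerProductSpace ℂ M] [CompleteSpace M]
    (φ : ℂ × ℂ → ℂ) (hφd : DifferentiableOn ℂ φ {z : ℂ × ℂ | ‖z‖ < 1})
    (hφb : ∀ z : ℂ × ℂ, ‖z‖ < 1 → ‖φ z‖ ≤ 1)
    (τ : ℂ × ℂ) (hτ1 : ‖τ.1‖ = 1) (hτ2 : ‖τ.2‖ = 1)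
    (Y : M →L[ℂ] M) (hY : Y.IsPositive) (hY' : ((1 : M →L[ℂ] M) - Y).IsPositive)
    (v : ℂ × ℂ → M) (hv : DifferentiableOn ℂ v {z : ℂ × ℂ | ‖z‖ < 1})
    -- `(M, v, I_Y)` is a generalized model for `φ`
    (hmodel : ∀ zl zm : ℂ × ℂ, ‖zl‖ < 1 → ‖zm‖ < 1 →
      (1 : ℂ) - starRingEnd ℂ (φ zm) * φ zl =
        (inner ℂ (v zm)
          ((((1 : M →L[ℂ] M) - ContinuousLinearMap.adjoint (IY Y τ zm) * IY Y τ zl)) (v zl)) : ℂ))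
    -- with a `C`-point at `τ`
    (vτ : M)
    (hC : ∀ S : Set (ℂ × ℂ), S ⊆ {z : ℂ × ℂ | ‖z‖ < 1} →
      (∃ c > 0, ∀ z ∈ S, ‖τ - z‖ ≤ c * (1 - ‖z‖)) →
      Tendsto v (nhdsWithin τ S) (nhds vτ)) :
    -- `τ` is a carapoint for `φ`
    ∃ (l : ℕ → ℂ × ℂ) (C : ℝ), (∀ n, ‖l n‖ < 1) ∧ Tendsto l atTop (nhds τ) ∧
      ∀ n, |(1 - ‖φ (l n)‖) / (1 - ‖l n‖)| ≤ C := by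
  set r : ℕ → ℝ := fun n => 1 - 1 / (n + 2) with hrdef
  have hτn : ‖τ‖ = 1 := by
    rw [Prod.norm_def, hτ1, hτ2]; simp
  have hr0 : ∀ n : ℕ, 0 ≤ r n := by
    intro n
    have h2 : (0:ℝ) < (n:ℝ) + 2 := by positivity
    have : 1 / ((n:ℝ) + 2) ≤ 1 := by
      rw [div_le_one h2]; linarith
    simp only [hrdef]; linarith
  have hr1 : ∀ n : ℕ, r n < 1 := by
    intro n
    have h2 : (0:ℝ) < 1 / ((n:ℝ) + 2) := by positivity
    simp only [hrdef]; linarith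
  set l : ℕ → ℂ × ℂ := fun n => ((r n : ℂ)) • τ with hldef
  have hnorm : ∀ n, ‖l n‖ = r n := by
    intro n
    rw [hldef]
    simp only [norm_smul, hτn, mul_one, Complex.norm_real, Real.norm_eq_abs]
    exact abs_of_nonneg (hr0 n)
  have hlt : ∀ n, ‖l n‖ < 1 := fun n => by rw [hnorm n]; exact hr1 n
  have hsub : ∀ n, ‖τ - l n‖ = 1 - r n := by
    intro n
    have : τ - l n = ((1 - r n : ℝ) : ℂ) • τ := by
      rw [hldef]
      push_cast
      rw [sub_smul, one_smul]
    rw [this]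
    simp only [norm_smul, hτn, mul_one, Complex.norm_real, Real.norm_eq_abs]
    exact abs_of_nonneg (by linarith [hr1 n])
  -- l tends to τ
  have h0 : Tendsto (fun n : ℕ => 1 / ((n:ℝ) + 2)) atTop (nhds 0) := by
    have ha : Tendsto (fun n : ℕ => (n:ℝ) + 2) atTop atTop :=
      tendsto_atTop_add_const_right _ 2 tendsto_natCast_atTop_atTop
    simpa [Function.comp_def, one_div] using tendsto_inv_atTop_zero.comp ha
  have hrt : Tendsto r atTop (nhds 1) := by
    have : Tendsto (fun n : ℕ => 1 - 1 / ((n:ℝ) + 2)) atTop (nhds (1 - 0)) :=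
      tendsto_const_nhds.sub h0
    rw [hrdef]
    simpa using this
  have hlt2 : Tendsto l atTop (nhds τ) := by
    have h1 : Tendsto (fun n => ((r n : ℝ) : ℂ)) atTop (nhds ((1:ℝ):ℂ)) :=
      (Complex.continuous_ofReal.tendsto 1).comp hrt
    have := h1.smul_const τ
    simpa [hldef] using this
  -- v along l tends to vτ
  have hvl : Tendsto (fun n => v (l n)) atTop (nhds vτ) := by
    have hS1 : Set.range l ⊆ {z : ℂ × ℂ | ‖z‖ < 1} := by
      rintro z ⟨n, rfl⟩; exact hlt n
    have hS2 : ∃ c > 0, ∀ z ∈ Set.range l, ‖τ - z‖ ≤ c * (1 - ‖z‖) := by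
      refine ⟨1, one_pos, ?_⟩
      rintro z ⟨n, rfl⟩
      rw [hsub n, hnorm n, one_mul]
    have hT := hC (Set.range l) hS1 hS2
    exact hT.comp (tendsto_nhdsWithin_of_tendsto_nhds_of_eventually_within l hlt2
      (Filter.Eventually.of_forall fun n => Set.mem_range_self n))
  obtain ⟨B, hB⟩ := (hvl.norm).bddAbove_range
  have hBmem : ∀ n, ‖v (l n)‖ ≤ B := fun n => hB (Set.mem_range_self n)
  have hB0 : 0 ≤ B := le_trans (norm_nonneg _) (hBmem 0)
  -- the model identity along l
  have key : ∀ n, 1 - ‖φ (l n)‖ ^ 2 = (1 - (r n) ^ 2) * ‖v (l n)‖ ^ 2 := by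
    intro n
    have hm := hmodel (l n) (l n) (hlt n) (hlt n)
    rw [show IY Y τ (l n) = (r n : ℂ) • 1 from IY_smul Y τ hτ1 hτ2 (r n) (hr1 n)] at hm
    have hadj : ContinuousLinearMap.adjoint ((r n : ℂ) • (1 : M →L[ℂ] M)) = (r n : ℂ) • 1 := by
      rw [← ContinuousLinearMap.star_eq_adjoint]
      simp [star_smul, Complex.conj_ofReal]
    rw [hadj] at hm
    have hrhs : (inner ℂ (v (l n))
        ((((1 : M →L[ℂ] M) - ((r n : ℂ) • 1) * ((r n : ℂ) • 1))) (v (l n))) : ℂ)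
        = (1 - (r n : ℂ) ^ 2) * ((‖v (l n)‖ : ℂ)) ^ 2 := by
      simp only [ContinuousLinearMap.sub_apply, ContinuousLinearMap.mul_apply,
        ContinuousLinearMap.smul_apply, ContinuousLinearMap.one_apply, inner_sub_right,
        inner_smul_right, inner_self_eq_norm_sq_to_K]
      rw [show ((RCLike.ofReal ‖v (l n)‖ : ℂ)) = ((‖v (l n)‖ : ℝ) : ℂ) from rfl]
      ring
    have hlhs : starRingEnd ℂ (φ (l n)) * φ (l n) = ((‖φ (l n)‖ : ℂ)) ^ 2 := by
      rw [mul_comm, Complex.mul_conj]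
      norm_cast
      rw [Complex.normSq_eq_norm_sq]
    rw [hlhs, hrhs] at hm
    have hc : ((1 - ‖φ (l n)‖ ^ 2 : ℝ) : ℂ) = (((1 - (r n) ^ 2) * ‖v (l n)‖ ^ 2 : ℝ) : ℂ) := by
      push_cast
      rw [hm]
    exact_mod_cast hc
  refine ⟨l, 2 * B ^ 2, hlt, hlt2, fun n => ?_⟩
  set x := ‖φ (l n)‖ with hx
  have hx0 : 0 ≤ x := norm_nonneg _
  have hx1 : x ≤ 1 := hφb _ (hlt n)
  have hrpos : 0 < 1 - r n := by linarith [hr1 n]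
  have hV2 : ‖v (l n)‖ ^ 2 ≤ B ^ 2 := pow_le_pow_left₀ (norm_nonneg _) (hBmem n) 2
  have h1 : 1 - x ^ 2 ≤ (1 - (r n) ^ 2) * B ^ 2 := by
    rw [key n]
    apply mul_le_mul_of_nonneg_left hV2
    nlinarith [hr0 n, hr1 n]
  have h2 : (1 - (r n) ^ 2) * B ^ 2 ≤ 2 * B ^ 2 * (1 - r n) := by
    nlinarith [mul_nonneg (sq_nonneg B) (sq_nonneg (1 - r n))]
  rw [hnorm n, _root_.abs_of_nonneg (div_nonneg (by linarith) (by linarith)),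
    div_le_iff₀ hrpos]
  nlinarith
end
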